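/- arXiv:1210.4572 — 2 statements merged into one kernel-verified Lean document; each statement's English description precedes it below -/
import Mathlib

section
/- Let k be bounded measurable, X adapted continuous, g(X_T) ∈ L_p(ℙ) for p ∈ [1, ∞], K := exp(∫_0^T k(r,X_r) dr). Then for all t ∈ [0,T]: ‖K g(X_T) − E(K g(X_T)|ℱ_t)‖_{L_p(ℙ)} ≤ 2 e^{‖k‖_∞ T} [‖k‖_∞ (T−t) ‖g(X_T)‖_{L_p(ℙ)} + ‖g(X_T) − E(g(X_T)|ℱ_t)‖_{L_p(ℙ)}]. -/
open MeasureTheory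
open scoped ENNReal

private lemma myTangentPos {r : ℝ} (hr : 1 ≤ r) {q : ℝ} (hq : 0 < q) (x : ℝ) :
    q ^ r + r * q ^ (r - 1) * (x - q) ≤ |x| ^ r := by
  have hr0 : (0:ℝ) < r := lt_of_lt_of_le one_pos hr
  -- reduce to x = |x| since slope is nonneg and x ≤ |x|
  have hslope : 0 ≤ r * q ^ (r - 1) := mul_nonneg hr0.le (Real.rpow_nonneg hq.le _)
  have hx : x ≤ |x| := le_abs_self x
  have step : q ^ r + r * q ^ (r - 1) * (x - q) ≤ q ^ r + r * q ^ (r - 1) * (|x| - q) := by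
    have := mul_le_mul_of_nonneg_left (sub_le_sub_right hx q) hslope
    linarith
  refine step.trans ?_
  -- now prove for y := |x| ≥ 0
  set y := |x| with hy
  have hy0 : 0 ≤ y := abs_nonneg x
  have hu : -1 ≤ y / q - 1 := by
    have : 0 ≤ y / q := div_nonneg hy0 hq.le
    linarith
  have hbern := one_add_mul_self_le_rpow_one_add hu hr
  have h1u : 1 + (y / q - 1) = y / q := by ring
  rw [h1u] at hbern
  -- hbern : 1 + r * (y/q - 1) ≤ (y/q) ^ r
  have hqr : (0:ℝ) < q ^ r := Real.rpow_pos_of_pos hq r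
  have hmul := mul_le_mul_of_nonneg_left hbern hqr.le
  have hyq : q ^ r * (y / q) ^ r = y ^ r := by
    rw [← Real.mul_rpow hq.le (div_nonneg hy0 hq.le)]
    rw [mul_div_cancel₀ _ hq.ne']
  rw [hyq] at hmul
  have hq1 : q ^ (r - 1) = q ^ r / q := by
    rw [Real.rpow_sub hq, Real.rpow_one]
  calc q ^ r + r * q ^ (r - 1) * (y - q)
      = q ^ r * (1 + r * (y / q - 1)) := by
        rw [hq1]; field_simp
    _ ≤ y ^ r := hmul

private lemma myTangent {r : ℝ} (hr : 1 ≤ r) (x q : ℝ) :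
    |q| ^ r + r * Real.sign q * |q| ^ (r - 1) * (x - q) ≤ |x| ^ r := by
  have hr0 : (0:ℝ) < r := lt_of_lt_of_le one_pos hr
  rcases lt_trichotomy q 0 with hq | hq | hq
  · have hs : Real.sign q = -1 := Real.sign_of_neg hq
    have h := myTangentPos hr (q := -q) (by linarith) (-x)
    rw [abs_neg] at h
    have habs : |q| = -q := abs_of_neg hq
    rw [hs, habs]
    calc (-q) ^ r + r * (-1) * (-q) ^ (r-1) * (x - q)
        = (-q) ^ r + r * (-q) ^ (r - 1) * (-x - -q) := by ring
      _ ≤ |x| ^ r := h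
  · subst hq
    simp only [Real.sign_zero, abs_zero]
    rw [Real.zero_rpow hr0.ne']
    have : (0:ℝ) ≤ |x| ^ r := Real.rpow_nonneg (abs_nonneg x) r
    nlinarith
  · have hs : Real.sign q = 1 := Real.sign_of_pos hq
    have habs : |q| = q := abs_of_pos hq
    rw [hs, habs]
    have := myTangentPos hr hq x
    nlinarith

private lemma myTangentSup {r : ℝ} (hr : 1 ≤ r) {x y : ℝ}
    (h : ∀ q : ℚ, |(q:ℝ)| ^ r + r * Real.sign (q:ℝ) * |(q:ℝ)| ^ (r - 1) * (x - (q:ℝ)) ≤ y) :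
    |x| ^ r ≤ y := by
  have hr0 : (0:ℝ) < r := lt_of_lt_of_le one_pos hr
  rcases eq_or_ne x 0 with rfl | hx
  · have h0 := h 0
    simp only [Rat.cast_zero, abs_zero, Real.sign_zero] at h0
    rw [abs_zero, Real.zero_rpow hr0.ne']
    rw [Real.zero_rpow hr0.ne'] at h0
    nlinarith
  · -- x ≠ 0 : take rationals tending to x
    set φ : ℝ → ℝ := fun q => |q| ^ r + r * Real.sign q * |q| ^ (r - 1) * (x - q) with hφ
    have hcont : ContinuousAt φ x := by
      have habs : ContinuousAt (fun q : ℝ => |q|) x := continuous_abs.continuousAt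
      have hxabs : |x| ≠ 0 := abs_ne_zero.2 hx
      have h1 : ContinuousAt (fun q : ℝ => |q| ^ r) x :=
        (Real.continuousAt_rpow_const _ _ (Or.inl hxabs)).comp habs
      have h2 : ContinuousAt (fun q : ℝ => |q| ^ (r - 1)) x :=
        (Real.continuousAt_rpow_const _ _ (Or.inl hxabs)).comp habs
      -- sign is locally constant near x ≠ 0
      have hsign : (fun q : ℝ => Real.sign q) =ᶠ[nhds x] fun _ => Real.sign x := by
        rcases lt_or_gt_of_ne hx with hneg | hpos
        · filter_upwards [eventually_lt_nhds hneg] with q hq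
          rw [Real.sign_of_neg hq, Real.sign_of_neg hneg]
        · filter_upwards [eventually_gt_nhds hpos] with q hq
          rw [Real.sign_of_pos hq, Real.sign_of_pos hpos]
      have heq : φ =ᶠ[nhds x]
          fun q => |q| ^ r + r * Real.sign x * |q| ^ (r - 1) * (x - q) := by
        filter_upwards [hsign] with q hq
        simp only [hφ, hq]
      refine ContinuousAt.congr ?_ heq.symm
      exact h1.add (((continuousAt_const.mul continuousAt_const).mul h2).mul
        (continuousAt_const.sub continuousAt_id))
    have hφx : φ x = |x| ^ r := by simp [hφ]
    -- sequence of rationals tending to x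
    have hseq : ∀ n : ℕ, ∃ q : ℚ, |x - (q:ℝ)| < 1 / (n + 1) := fun n =>
      exists_rat_near x (by positivity)
    choose q hq using hseq
    have htend : Filter.Tendsto (fun n => (q n : ℝ)) Filter.atTop (nhds x) := by
      rw [tendsto_iff_dist_tendsto_zero]
      have : Filter.Tendsto (fun n : ℕ => 1 / ((n:ℝ) + 1)) Filter.atTop (nhds 0) :=
        tendsto_one_div_add_atTop_nhds_zero_nat
      refine squeeze_zero (fun n => dist_nonneg) (fun n => ?_) this
      rw [Real.dist_eq, abs_sub_comm]
      exact (hq n).le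
    have : Filter.Tendsto (fun n => φ (q n)) Filter.atTop (nhds (|x| ^ r)) := by
      rw [← hφx]
      exact hcont.tendsto.comp htend
    exact le_of_tendsto this (Filter.Eventually.of_forall fun n => h (q n))

private lemma myCondexpContract {Ω : Type*} {m mΩ : MeasurableSpace Ω} (hm : m ≤ mΩ)
    {μ : Measure Ω} [IsProbabilityMeasure μ] {f : Ω → ℝ} {p : ℝ≥0∞} (hp : 1 ≤ p)
    (hf : MemLp f p μ) : eLpNorm (μ[f|m]) p μ ≤ eLpNorm f p μ := by
  have hfi : Integrable f μ := hf.integrable hp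
  rcases eq_or_ne p ∞ with rfl | hptop
  · -- p = ∞
    rcases eq_or_ne (eLpNorm f ∞ μ) ∞ with htop | htop
    · rw [htop]; exact le_top
    set c : ℝ := (eLpNorm f ∞ μ).toReal with hc
    have hbd : ∀ᵐ ω ∂μ, ‖f ω‖ ≤ c := by
      filter_upwards [enorm_ae_le_eLpNormEssSup f μ] with ω hω
      rw [← eLpNorm_exponent_top] at hω
      have := ENNReal.toReal_mono htop hω
      simpa [hc] using this
    have hub : μ[f|m] ≤ᵐ[μ] fun _ => c := by
      have h1 : f ≤ᵐ[μ] fun _ => c := by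
        filter_upwards [hbd] with ω hω; exact (le_abs_self _).trans hω
      have h2 := condExp_mono (m := m) hfi (integrable_const c) h1
      rwa [condExp_const hm c] at h2
    have hlb : (fun _ : Ω => -c) ≤ᵐ[μ] μ[f|m] := by
      have h1 : (fun _ : Ω => -c) ≤ᵐ[μ] f := by
        filter_upwards [hbd] with ω hω
        have := abs_le.1 hω; linarith [this.1]
      have h2 := condExp_mono (m := m) (integrable_const (-c)) hfi h1
      rwa [condExp_const hm (-c)] at h2
    have hgb : ∀ᵐ ω ∂μ, ‖(μ[f|m]) ω‖ ≤ c := by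
      filter_upwards [hub, hlb] with ω h₁ h₂
      rw [Real.norm_eq_abs, abs_le]; exact ⟨h₂, h₁⟩
    calc eLpNorm (μ[f|m]) ∞ μ ≤ μ Set.univ ^ (∞ : ℝ≥0∞).toReal⁻¹ * ENNReal.ofReal c :=
          eLpNorm_le_of_ae_bound hgb
      _ = eLpNorm f ∞ μ := by
          have h0 : μ Set.univ ^ (∞ : ℝ≥0∞).toReal⁻¹ = 1 := by simp [measure_univ]
          rw [h0, one_mul, hc, ENNReal.ofReal_toReal htop]
  · -- 1 ≤ p < ∞
    have hp0 : p ≠ 0 := fun h => by simp [h] at hp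
    set r : ℝ := p.toReal with hrdef
    have hr : 1 ≤ r := by
      rw [hrdef, ← ENNReal.toReal_one]
      exact ENNReal.toReal_mono hptop hp
    have hr0 : (0:ℝ) < r := lt_of_lt_of_le one_pos hr
    set G : Ω → ℝ := fun ω => |f ω| ^ r with hG
    have hGi : Integrable G μ := by
      have := hf.integrable_norm_rpow hp0 hptop
      simpa [hG, Real.norm_eq_abs] using this
    -- tangent inequalities through condExp
    have hstep : ∀ q : ℚ, ∀ᵐ ω ∂μ,
        |(q:ℝ)| ^ r + r * Real.sign (q:ℝ) * |(q:ℝ)| ^ (r - 1) * ((μ[f|m]) ω - (q:ℝ))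
          ≤ (μ[G|m]) ω := by
      intro q
      set a : ℝ := r * Real.sign (q:ℝ) * |(q:ℝ)| ^ (r - 1) with ha
      set b : ℝ := |(q:ℝ)| ^ r - a * (q:ℝ) with hb
      have hpt : ∀ ω, a * f ω + b ≤ G ω := by
        intro ω
        have := myTangent hr (f ω) (q:ℝ)
        simp only [hG, ha, hb]; nlinarith [this]
      have hint1 : Integrable (fun ω => a * f ω + b) μ :=
        (hfi.const_mul a).add (integrable_const b)
      have hmono := condExp_mono (m := m) hint1 hGi (Filter.Eventually.of_forall hpt)
      have hlin : μ[fun ω => a * f ω + b|m] =ᵐ[μ] fun ω => a * (μ[f|m]) ω + b := by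
        have h1 := condExp_add (m := m) (μ := μ) (hfi.const_mul a) (integrable_const b)
        have h2 : μ[fun ω => a * f ω|m] =ᵐ[μ] fun ω => a * (μ[f|m]) ω := by
          have := condExp_smul (m := m) (μ := μ) a f
          simpa [Pi.smul_def, smul_eq_mul] using this
        filter_upwards [h1, h2] with ω h₁ h₂
        calc (μ[fun ω => a * f ω + b|m]) ω
            = (μ[fun ω => a * f ω|m]) ω + (μ[fun _ => b|m]) ω := h₁
          _ = a * (μ[f|m]) ω + b := by
              rw [h₂, condExp_const hm b]
      filter_upwards [hmono, hlin] with ω h₁ h₂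
      have : a * (μ[f|m]) ω + b ≤ (μ[G|m]) ω := by rw [← h₂]; exact h₁
      simp only [ha, hb] at this ⊢; nlinarith [this]
    have hae : ∀ᵐ ω ∂μ, |(μ[f|m]) ω| ^ r ≤ (μ[G|m]) ω := by
      have hall := (ae_all_iff).2 hstep
      filter_upwards [hall] with ω hω
      exact myTangentSup hr hω
    -- integrate
    rw [eLpNorm_eq_lintegral_rpow_enorm_toReal hp0 hptop,
        eLpNorm_eq_lintegral_rpow_enorm_toReal hp0 hptop]
    rw [← hrdef]
    refine ENNReal.rpow_le_rpow ?_ (by positivity)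
    have key : ∫⁻ ω, ‖(μ[f|m]) ω‖ₑ ^ r ∂μ ≤ ∫⁻ ω, ENNReal.ofReal ((μ[G|m]) ω) ∂μ := by
      refine lintegral_mono_ae ?_
      filter_upwards [hae] with ω hω
      rw [Real.enorm_eq_ofReal_abs, ENNReal.ofReal_rpow_of_nonneg (abs_nonneg _) hr0.le]
      exact ENNReal.ofReal_le_ofReal hω
    refine key.trans ?_
    have h1 : ∫⁻ ω, ENNReal.ofReal ((μ[G|m]) ω) ∂μ = ENNReal.ofReal (∫ ω, (μ[G|m]) ω ∂μ) := by
      rw [MeasureTheory.ofReal_integral_eq_lintegral_ofReal integrable_condExp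
        (condExp_nonneg (Filter.Eventually.of_forall fun ω => by positivity))]
    have h2 : ∫ ω, (μ[G|m]) ω ∂μ = ∫ ω, G ω ∂μ := integral_condExp hm
    rw [h1, h2, MeasureTheory.ofReal_integral_eq_lintegral_ofReal hGi
      (Filter.Eventually.of_forall fun ω => by positivity)]
    refine lintegral_mono fun ω => ?_
    rw [Real.enorm_eq_ofReal_abs, ENNReal.ofReal_rpow_of_nonneg (abs_nonneg _) hr0.le]

private lemma myIntMeas {Ω : Type*} {m : MeasurableSpace Ω} {d : ℕ}
    (k : ℝ → (Fin d → ℝ) → ℝ) (hk : Measurable (Function.uncurry k))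
    (Y : ℝ → Ω → (Fin d → ℝ)) (hY : ∀ r, StronglyMeasurable[m] (Y r))
    (hYc : ∀ ω, Continuous fun r => Y r ω) (a b : ℝ) :
    StronglyMeasurable[m] fun ω => ∫ r in a..b, k r (Y r ω) := by
  have hu : StronglyMeasurable (Function.uncurry Y) :=
    stronglyMeasurable_uncurry_of_continuous_of_stronglyMeasurable hYc hY
  have hkY : Measurable fun p : Ω × ℝ => k p.2 (Y p.2 p.1) := by
    have h1 : Measurable fun p : Ω × ℝ => (p.2, Y p.2 p.1) := by
      exact measurable_snd.prodMk (hu.measurable.comp measurable_swap)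
    exact hk.comp h1
  have hmain : ∀ c e : ℝ, StronglyMeasurable[m] fun ω =>
      ∫ r in Set.Ioc c e, k r (Y r ω) := by
    intro c e
    exact StronglyMeasurable.integral_prod_right' (ν := volume.restrict (Set.Ioc c e))
      hkY.stronglyMeasurable
  have : (fun ω => ∫ r in a..b, k r (Y r ω)) =
      fun ω => (∫ r in Set.Ioc a b, k r (Y r ω)) - ∫ r in Set.Ioc b a, k r (Y r ω) := by
    funext ω
    rw [intervalIntegral]
  rw [this]
  exact (hmain a b).sub (hmain b a)

private lemma myExpAbs (y : ℝ) : |Real.exp y - 1| ≤ |y| * Real.exp |y| := by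
  rcases le_or_gt 0 y with hy | hy
  · rw [abs_of_nonneg hy, abs_of_nonneg (by nlinarith [Real.one_le_exp hy] : (0:ℝ) ≤ Real.exp y - 1)]
    have h1 := Real.add_one_le_exp (-y)
    rw [Real.exp_neg] at h1
    have h2 := Real.exp_pos y
    nlinarith [mul_le_mul_of_nonneg_right h1 h2.le, inv_mul_cancel₀ h2.ne']
  · have hlt : Real.exp y < 1 := Real.exp_lt_one_iff.mpr hy
    rw [abs_of_neg hy, abs_of_nonpos (by linarith : Real.exp y - 1 ≤ 0)]
    have h1 := Real.add_one_le_exp y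
    have h2 : 1 ≤ Real.exp (-y) := Real.one_le_exp (by linarith)
    nlinarith

/-- L_p bound for the conditional oscillation of K·g(X_T), where
K = exp(∫_0^T k(r,X_r) dr), in terms of the oscillation of g(X_T). -/
theorem eLpNorm_exp_potential_mul_condexp_osc_bound
    {Ω : Type*} {mΩ : MeasurableSpace Ω} (P : Measure Ω) [IsProbabilityMeasure P]
    (F : Filtration ℝ mΩ) (d : ℕ) (T : ℝ) (hT : 0 < T)
    (X : ℝ → Ω → (Fin d → ℝ)) (hXadapted : Adapted F X)
    (hXcont : ∀ ω, Continuous fun s => X s ω)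
    (k : ℝ → (Fin d → ℝ) → ℝ) (hkmeas : Measurable (Function.uncurry k))
    (C : ℝ) (hC : 0 ≤ C) (hkbound : ∀ s x, |k s x| ≤ C)
    (g : (Fin d → ℝ) → ℝ) (hg : Measurable g)
    (p : ℝ≥0∞) (hp : 1 ≤ p) (hgX : MemLp (fun ω => g (X T ω)) p P) :
    ∀ t ∈ Set.Icc (0 : ℝ) T,
      eLpNorm
        (fun ω => Real.exp (∫ r in (0 : ℝ)..T, k r (X r ω)) * g (X T ω) -
          (P[fun ω' => Real.exp (∫ r in (0 : ℝ)..T, k r (X r ω')) * g (X T ω') | F t]) ω)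
        p P ≤
      ENNReal.ofReal (2 * Real.exp (C * T)) *
        (ENNReal.ofReal (C * (T - t)) * eLpNorm (fun ω => g (X T ω)) p P +
          eLpNorm (fun ω => g (X T ω) - (P[fun ω' => g (X T ω') | F t]) ω) p P) := by
  intro t ht
  obtain ⟨ht0, htT⟩ := ht
  -- basic measurability and integrability of the potential integrand
  have hkrm : ∀ ω, Measurable fun r => k r (X r ω) := fun ω =>
    hkmeas.comp (measurable_id.prodMk (hXcont ω).measurable)
  have hii : ∀ ω (a b : ℝ), IntervalIntegrable (fun r => k r (X r ω)) volume a b := by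
    intro ω a b
    rw [intervalIntegrable_iff]
    refine Integrable.mono' (g := fun _ => C) ?_ (hkrm ω).aestronglyMeasurable ?_
    · refine (integrableOn_const_iff (C := C)).2 (Or.inr ?_)
      rw [Set.uIoc]
      exact measure_Ioc_lt_top
    · exact Filter.Eventually.of_forall fun r => by
        simpa [Real.norm_eq_abs] using hkbound r (X r ω)
  -- strong measurability of the running integral w.r.t. the filtration
  have hIsm : ∀ s : ℝ, 0 ≤ s →
      StronglyMeasurable[F s] fun ω => ∫ r in (0:ℝ)..s, k r (X r ω) := by
    intro s hs
    have h := myIntMeas (m := F s) k hkmeas (fun r => X (min r s))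
      (fun r => ((hXadapted (min r s)).mono (F.mono (min_le_right r s)) le_rfl).stronglyMeasurable)
      (fun ω => (hXcont ω).comp (continuous_id.min continuous_const)) 0 s
    have heq : (fun ω => ∫ r in (0:ℝ)..s, k r (X r ω)) =
        fun ω => ∫ r in (0:ℝ)..s, k r (X (min r s) ω) := by
      funext ω
      refine intervalIntegral.integral_congr fun r hr => ?_
      rw [Set.uIcc_of_le hs] at hr
      rw [min_eq_left hr.2]
    rw [heq]
    exact h
  -- pointwise bound on interval integrals
  have hIb : ∀ (ω : Ω) (a b : ℝ), |∫ r in a..b, k r (X r ω)| ≤ C * |b - a| := by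
    intro ω a b
    have := intervalIntegral.norm_integral_le_of_norm_le_const
      (C := C) (f := fun r => k r (X r ω)) (a := a) (b := b)
      (fun r _ => by simpa [Real.norm_eq_abs] using hkbound r (X r ω))
    simpa [Real.norm_eq_abs] using this
  -- abbreviations
  set Z : Ω → ℝ := fun ω =>
    Real.exp (∫ r in (0:ℝ)..T, k r (X r ω)) * g (X T ω) with hZdef
  set V : Ω → ℝ := fun ω => g (X T ω) with hVdef
  set U : Ω → ℝ := fun ω => Real.exp (∫ r in (0:ℝ)..T, k r (X r ω)) with hUdef
  set A : Ω → ℝ := fun ω => Real.exp (∫ r in (0:ℝ)..t, k r (X r ω)) with hAdef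
  set EV : Ω → ℝ := P[V|F t] with hEVdef
  set W : Ω → ℝ := fun ω => A ω * EV ω with hWdef
  -- bounds
  have hexpT : (0:ℝ) < Real.exp (C * T) := Real.exp_pos _
  have hA_bound : ∀ ω, |A ω| ≤ Real.exp (C * T) := by
    intro ω
    have h1 : |∫ r in (0:ℝ)..t, k r (X r ω)| ≤ C * t := by
      have := hIb ω 0 t
      rwa [sub_zero, abs_of_nonneg ht0] at this
    rw [hAdef, abs_of_pos (Real.exp_pos _)]
    refine Real.exp_le_exp.mpr ?_
    have := (abs_le.1 h1).2
    nlinarith [mul_le_mul_of_nonneg_left htT hC]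
  have hU_bound : ∀ ω, |U ω| ≤ Real.exp (C * T) := by
    intro ω
    have h1 : |∫ r in (0:ℝ)..T, k r (X r ω)| ≤ C * T := by
      have := hIb ω 0 T
      rwa [sub_zero, abs_of_nonneg hT.le] at this
    rw [hUdef, abs_of_pos (Real.exp_pos _)]
    exact Real.exp_le_exp.mpr (abs_le.1 h1).2
  have hUA : ∀ ω, |U ω - A ω| ≤ C * (T - t) * Real.exp (C * T) := by
    intro ω
    have hsplit : (∫ r in (0:ℝ)..T, k r (X r ω)) =
        (∫ r in (0:ℝ)..t, k r (X r ω)) + ∫ r in t..T, k r (X r ω) :=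
      (intervalIntegral.integral_add_adjacent_intervals (hii ω 0 t) (hii ω t T)).symm
    have hI : |∫ r in (0:ℝ)..t, k r (X r ω)| ≤ C * t := by
      have := hIb ω 0 t; rwa [sub_zero, abs_of_nonneg ht0] at this
    have hJ : |∫ r in t..T, k r (X r ω)| ≤ C * (T - t) := by
      have h := hIb ω t T
      rw [abs_of_nonneg (show (0:ℝ) ≤ T - t by linarith)] at h
      exact h
    set I := ∫ r in (0:ℝ)..t, k r (X r ω)
    set J := ∫ r in t..T, k r (X r ω)
    have h1 : U ω - A ω = Real.exp I * (Real.exp J - 1) := by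
      rw [hUdef, hAdef]
      simp only []
      rw [hsplit, Real.exp_add]
      ring
    rw [h1, abs_mul, abs_of_pos (Real.exp_pos I)]
    have h2 : |Real.exp J - 1| ≤ |J| * Real.exp |J| := myExpAbs J
    have h3 : Real.exp I ≤ Real.exp (C * t) := Real.exp_le_exp.mpr (abs_le.1 hI).2
    have h4 : Real.exp |J| ≤ Real.exp (C * (T - t)) := Real.exp_le_exp.mpr hJ
    have h5 : |J| * Real.exp |J| ≤ (C * (T - t)) * Real.exp (C * (T - t)) :=
      mul_le_mul hJ h4 (Real.exp_pos _).le
        (mul_nonneg hC (show (0:ℝ) ≤ T - t by linarith))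
    calc Real.exp I * |Real.exp J - 1|
        ≤ Real.exp (C * t) * ((C * (T - t)) * Real.exp (C * (T - t))) :=
          mul_le_mul h3 (h2.trans h5) (abs_nonneg _) (Real.exp_pos _).le
      _ = C * (T - t) * Real.exp (C * T) := by
          rw [show Real.exp (C*t) * ((C * (T - t)) * Real.exp (C * (T - t)))
            = C * (T - t) * (Real.exp (C*t) * Real.exp (C * (T - t))) by ring,
            ← Real.exp_add]
          ring_nf
  -- strong measurability
  have hUsm : AEStronglyMeasurable U P :=
    ((Real.continuous_exp.comp_stronglyMeasurable (hIsm T hT.le)).mono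
      (F.le T)).aestronglyMeasurable
  have hAsmFt : StronglyMeasurable[F t] A :=
    Real.continuous_exp.comp_stronglyMeasurable (hIsm t ht0)
  have hAsm : AEStronglyMeasurable A P := (hAsmFt.mono (F.le t)).aestronglyMeasurable
  have hVsm : AEStronglyMeasurable V P := hgX.aestronglyMeasurable
  have hEVsmFt : StronglyMeasurable[F t] EV := stronglyMeasurable_condExp
  have hEVsm : AEStronglyMeasurable EV P := (hEVsmFt.mono (F.le t)).aestronglyMeasurable
  -- MemLp facts
  have hVmem : MemLp V p P := hgX
  have hZmem : MemLp Z p P := by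
    refine MemLp.of_le_mul (c := Real.exp (C * T)) hVmem (hUsm.mul hVsm) ?_
    refine Filter.Eventually.of_forall fun ω => ?_
    simp only [Real.norm_eq_abs, hZdef, hVdef, abs_mul]
    exact mul_le_mul_of_nonneg_right (hU_bound ω) (abs_nonneg _)
  have hEVmem : MemLp EV p P :=
    ⟨hEVsm, lt_of_le_of_lt (myCondexpContract (F.le t) hp hVmem) hVmem.2⟩
  have hWmem : MemLp W p P := by
    refine MemLp.of_le_mul (c := Real.exp (C * T)) hEVmem (hAsm.mul hEVsm) ?_
    refine Filter.Eventually.of_forall fun ω => ?_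
    simp only [Real.norm_eq_abs, hWdef, abs_mul]
    exact mul_le_mul_of_nonneg_right (hA_bound ω) (abs_nonneg _)
  have hZint : Integrable Z P := hZmem.integrable hp
  have hWint : Integrable W P := hWmem.integrable hp
  have hDmem : MemLp (Z - W) p P := hZmem.sub hWmem
  -- conditional expectation facts
  have hWsmFt : StronglyMeasurable[F t] W := hAsmFt.mul hEVsmFt
  have hcondW : P[W|F t] = W := condExp_of_stronglyMeasurable (F.le t) hWsmFt hWint
  have hkey : (fun ω => Z ω - (P[Z|F t]) ω) =ᵐ[P]
      fun ω => (Z - W) ω - (P[Z - W|F t]) ω := by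
    filter_upwards [condExp_sub (m := F t) (μ := P) hZint hWint] with ω h₁
    simp only [Pi.sub_apply] at h₁ ⊢
    rw [h₁, congrFun hcondW ω]
    ring
  -- main estimate on Z - W
  set c1 : ℝ := C * (T - t) * Real.exp (C * T) with hc1
  have hc1nn : 0 ≤ c1 := mul_nonneg (mul_nonneg hC (by linarith)) hexpT.le
  set P1 : Ω → ℝ := fun ω => (U ω - A ω) * V ω with hP1
  set P2 : Ω → ℝ := fun ω => A ω * (V ω - EV ω) with hP2
  have hDeq : Z - W = P1 + P2 := by
    funext ω
    simp only [Pi.sub_apply, Pi.add_apply, hP1, hP2, hZdef, hWdef, hUdef, hVdef]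
    ring
  have hP1sm : AEStronglyMeasurable P1 P := (hUsm.sub hAsm).mul hVsm
  have hP2sm : AEStronglyMeasurable P2 P := hAsm.mul (hVsm.sub hEVsm)
  have hP1le : eLpNorm P1 p P ≤ ENNReal.ofReal c1 * eLpNorm V p P := by
    have h1 : eLpNorm P1 p P ≤ eLpNorm (c1 • V) p P := by
      refine eLpNorm_mono_ae (Filter.Eventually.of_forall fun ω => ?_)
      simp only [Pi.smul_apply, smul_eq_mul, Real.norm_eq_abs, abs_mul, hP1]
      rw [abs_of_nonneg hc1nn]
      exact mul_le_mul_of_nonneg_right (hUA ω) (abs_nonneg _)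
    refine h1.trans_eq ?_
    rw [eLpNorm_const_smul]
    rw [Real.enorm_eq_ofReal_abs, abs_of_nonneg hc1nn]
  have hP2le : eLpNorm P2 p P ≤
      ENNReal.ofReal (Real.exp (C * T)) * eLpNorm (V - EV) p P := by
    have h1 : eLpNorm P2 p P ≤ eLpNorm (Real.exp (C * T) • (V - EV)) p P := by
      refine eLpNorm_mono_ae (Filter.Eventually.of_forall fun ω => ?_)
      simp only [Pi.smul_apply, Pi.sub_apply, smul_eq_mul, Real.norm_eq_abs, abs_mul, hP2]
      rw [abs_of_pos hexpT]
      exact mul_le_mul_of_nonneg_right (hA_bound ω) (abs_nonneg _)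
    refine h1.trans_eq ?_
    rw [eLpNorm_const_smul]
    rw [Real.enorm_eq_ofReal_abs, abs_of_pos hexpT]
  have hDle : eLpNorm (Z - W) p P ≤
      ENNReal.ofReal c1 * eLpNorm V p P +
        ENNReal.ofReal (Real.exp (C * T)) * eLpNorm (V - EV) p P := by
    rw [hDeq]
    exact (eLpNorm_add_le hP1sm hP2sm hp).trans (add_le_add hP1le hP2le)
  -- putting things together
  have hmain : eLpNorm (fun ω => Z ω - (P[Z|F t]) ω) p P ≤ 2 * eLpNorm (Z - W) p P := by
    calc eLpNorm (fun ω => Z ω - (P[Z|F t]) ω) p P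
        = eLpNorm ((Z - W) - P[Z - W|F t]) p P := eLpNorm_congr_ae hkey
      _ ≤ eLpNorm (Z - W) p P + eLpNorm (P[Z - W|F t]) p P :=
          eLpNorm_sub_le hDmem.aestronglyMeasurable
            (stronglyMeasurable_condExp.mono (F.le t)).aestronglyMeasurable hp
      _ ≤ eLpNorm (Z - W) p P + eLpNorm (Z - W) p P :=
          add_le_add_right (myCondexpContract (F.le t) hp hDmem) _
      _ = 2 * eLpNorm (Z - W) p P := (two_mul _).symm
  -- final arithmetic
  have hgoal : eLpNorm (fun ω => Z ω - (P[Z|F t]) ω) p P ≤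
      ENNReal.ofReal (2 * Real.exp (C * T)) *
        (ENNReal.ofReal (C * (T - t)) * eLpNorm V p P + eLpNorm (V - EV) p P) := by
    refine hmain.trans ?_
    rw [mul_add]
    have e1 : (2:ℝ≥0∞) * (ENNReal.ofReal c1 * eLpNorm V p P) =
        ENNReal.ofReal (2 * Real.exp (C * T)) *
          (ENNReal.ofReal (C * (T - t)) * eLpNorm V p P) := by
      rw [← mul_assoc, ← mul_assoc]
      congr 1
      rw [show (2:ℝ≥0∞) = ENNReal.ofReal 2 by simp,
        ← ENNReal.ofReal_mul (by norm_num), ← ENNReal.ofReal_mul (by positivity)]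
      congr 1
      rw [hc1]; ring
    have e2 : (2:ℝ≥0∞) * (ENNReal.ofReal (Real.exp (C * T)) * eLpNorm (V - EV) p P) =
        ENNReal.ofReal (2 * Real.exp (C * T)) * eLpNorm (V - EV) p P := by
      rw [← mul_assoc]
      congr 1
      rw [show (2:ℝ≥0∞) = ENNReal.ofReal 2 by simp, ← ENNReal.ofReal_mul (by norm_num)]
    calc 2 * eLpNorm (Z - W) p P
        ≤ 2 * (ENNReal.ofReal c1 * eLpNorm V p P +
            ENNReal.ofReal (Real.exp (C * T)) * eLpNorm (V - EV) p P) := by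
          exact mul_le_mul_right hDle 2
      _ = ENNReal.ofReal (2 * Real.exp (C * T)) *
            (ENNReal.ofReal (C * (T - t)) * eLpNorm V p P) +
          ENNReal.ofReal (2 * Real.exp (C * T)) * eLpNorm (V - EV) p P := by
          rw [mul_add, e1, e2]
  exact hgoal
end

section
/- Let 0 < θ < 1, 2 ≤ q ≤ ∞, and let d^0, d^1, d^2 : [0,T) → [0,∞) be measurable. Assume there exist A ≥ 0 and D ≥ 1 such that for k = 1,2 and all t ∈ [0,T): (1/D)(T−t)^{k/2} d^k(t) ≤ d^0(t) ≤ D (∫_t^T [d^1(s)]^2 ds)^{1/2}, and d^1(t) ≤ A + D (∫_0^t [d^2(u)]^2 du)^{1/2}. Then there is a constant c > 0 depending only on (D, θ, q, T) such that for all k, l ∈ {0,1,2}: (1/c)[A + Φ_q((T−t)^{(l−θ)/2} d^l(t))] ≤ A + Φ_q((T−t)^{(k−θ)/2} d^k(t)) ≤ c[A + Φ_q((T−t)^{(l−θ)/2} d^l(t))], where both sides may be +∞ simultaneously. -/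
open MeasureTheory
open scoped ENNReal

/-- `Φ_q(h) = ‖h‖_{L_q([0,T), dt/(T-t))}`. -/
noncomputable def Phi (T : ℝ) (q : ℝ≥0∞) (h : ℝ → ℝ) : ℝ≥0∞ :=
  eLpNorm h q
    ((MeasureTheory.volume.restrict (Set.Ico (0 : ℝ) T)).withDensity
      fun t => ENNReal.ofReal (1 / (T - t)))

open Set

/-- ∫_{(a,b)} (T-x)^e dx as an ofReal, when integrable. -/
private lemma lint_weight_eq {T a b e : ℝ} (hab : a ≤ b) (hbT : b ≤ T)
    (hInt : IntervalIntegrable (fun x : ℝ => x ^ e) volume (T - b) (T - a)) :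
    ∫⁻ x in Ioo a b, ENNReal.ofReal ((T - x) ^ e)
      = ENNReal.ofReal (∫ x in (T - b)..(T - a), x ^ e) := by
  have hInt' : IntervalIntegrable (fun x : ℝ => (T - x) ^ e) volume a b := by
    have := hInt.symm.comp_sub_left T
    simpa [sub_sub_cancel] using this
  have h1 : ∫⁻ x in Ioo a b, ENNReal.ofReal ((T - x) ^ e)
      = ∫⁻ x in Ioc a b, ENNReal.ofReal ((T - x) ^ e) :=
    setLIntegral_congr MeasureTheory.Ioo_ae_eq_Ioc
  have h2 : ENNReal.ofReal (∫ x in Ioc a b, (T - x) ^ e)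
      = ∫⁻ x in Ioc a b, ENNReal.ofReal ((T - x) ^ e) := by
    apply MeasureTheory.ofReal_integral_eq_lintegral_ofReal
    · rw [← Set.uIoc_of_le hab]
      exact intervalIntegrable_iff.mp hInt'
    · filter_upwards [ae_restrict_mem measurableSet_Ioc] with x hx
      exact Real.rpow_nonneg (by have := hx.2; linarith) e
  rw [h1, ← h2, ← intervalIntegral.integral_of_le hab,
    ← intervalIntegral.integral_comp_sub_left (fun x : ℝ => x ^ e) T]

/-- Weight integral, singular case `α < -1`. -/
lemma weightA {T s α : ℝ} (hα : α < -1) (hs0 : 0 ≤ s) (hsT : s < T) :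
    ∫⁻ x in Ioo 0 s, ENNReal.ofReal ((T - x) ^ α)
      ≤ ENNReal.ofReal ((T - s) ^ (α + 1) / (-(α + 1))) := by
  have hTs : 0 < T - s := by linarith
  have hT : 0 < T := by linarith
  have hInt : IntervalIntegrable (fun x : ℝ => x ^ α) volume (T - s) (T - 0) := by
    apply ContinuousOn.intervalIntegrable
    intro x hx
    have hx0 : 0 < x := by
      rcases le_total (T - s) (T - 0) with h | h
      · rw [uIcc_of_le h] at hx; linarith [hx.1]
      · rw [uIcc_of_ge h] at hx; linarith [hx.1, hTs]
    exact (Real.continuousAt_rpow_const x α (Or.inl hx0.ne')).continuousWithinAt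
  rw [lint_weight_eq hs0 hsT.le hInt]
  rw [integral_rpow (Or.inr ⟨by linarith, by
    intro h
    rcases le_total (T - s) (T - 0) with hle | hle
    · rw [uIcc_of_le hle] at h; linarith [h.1]
    · rw [uIcc_of_ge hle] at h; linarith [h.1]⟩)]
  apply ENNReal.ofReal_le_ofReal
  have hne : α + 1 < 0 := by linarith
  rw [sub_zero]
  have hTpow : 0 ≤ T ^ (α + 1) := Real.rpow_nonneg hT.le _
  have h3 : (T ^ (α + 1) - (T - s) ^ (α + 1)) / (α + 1)
      = (-(T ^ (α + 1) - (T - s) ^ (α + 1))) / (-(α + 1)) := by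
    rw [neg_div_neg_eq]
  rw [h3]
  gcongr
  · linarith
  · linarith

/-- Weight integral, regular case `γ > -1`. -/
lemma weightB {T t γ : ℝ} (hγ : -1 < γ) (ht : t < T) :
    ∫⁻ x in Ioo t T, ENNReal.ofReal ((T - x) ^ γ)
      ≤ ENNReal.ofReal ((T - t) ^ (γ + 1) / (γ + 1)) := by
  have hInt : IntervalIntegrable (fun x : ℝ => x ^ γ) volume (T - T) (T - t) :=
    intervalIntegral.intervalIntegrable_rpow' hγ
  rw [lint_weight_eq ht.le le_rfl hInt]
  rw [integral_rpow (Or.inl hγ)]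
  apply ENNReal.ofReal_le_ofReal
  rw [sub_self, Real.zero_rpow (by linarith), sub_zero]

lemma swap_lt {T : ℝ} (g H : ℝ → ℝ≥0∞) (hg : Measurable g) (hH : Measurable H) :
    ∫⁻ t in Ioo 0 T, g t * ∫⁻ s in Ioo t T, H s
      = ∫⁻ s in Ioo 0 T, H s * ∫⁻ t in Ioo 0 s, g t := by
  classical
  set A : Set (ℝ × ℝ) := {p : ℝ × ℝ | 0 < p.1 ∧ p.1 < p.2 ∧ p.2 < T} with hA
  have hAm : MeasurableSet A := by
    apply MeasurableSet.inter
    · exact measurableSet_lt measurable_const measurable_fst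
    · exact (measurableSet_lt measurable_fst measurable_snd).inter
        (measurableSet_lt measurable_snd measurable_const)
  set F : ℝ → ℝ → ℝ≥0∞ := fun t s => A.indicator (fun p : ℝ × ℝ => g p.1 * H p.2) (t, s) with hF
  have hFm : AEMeasurable (Function.uncurry F) (volume.prod volume) := by
    have : Function.uncurry F = A.indicator (fun p : ℝ × ℝ => g p.1 * H p.2) := by
      funext p; cases p; rfl
    rw [this]
    exact (Measurable.indicator ((hg.comp measurable_fst).mul (hH.comp measurable_snd)) hAm).aemeasurable
  have key := MeasureTheory.lintegral_lintegral_swap hFm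
  have hL : ∫⁻ t, ∫⁻ s, F t s = ∫⁻ t in Ioo 0 T, g t * ∫⁻ s in Ioo t T, H s := by
    have h1 : ∀ t, (∫⁻ s, F t s)
        = (Ioo (0:ℝ) T).indicator (fun t => g t * ∫⁻ s in Ioo t T, H s) t := by
      intro t
      by_cases ht : t ∈ Ioo (0:ℝ) T
      · rw [Set.indicator_of_mem ht]
        have : ∀ s, F t s = (Ioo t T).indicator (fun s => g t * H s) s := by
          intro s
          by_cases hs : s ∈ Ioo t T
          · rw [Set.indicator_of_mem hs]
            simp only [hF]
            exact Set.indicator_of_mem (show (t, s) ∈ A from ⟨ht.1, hs.1, hs.2⟩) _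
          · rw [Set.indicator_of_notMem hs]
            simp only [hF]
            apply Set.indicator_of_notMem
            intro hmem
            exact hs ⟨hmem.2.1, hmem.2.2⟩
        rw [lintegral_congr this, lintegral_indicator measurableSet_Ioo]
        rw [lintegral_const_mul _ hH]
      · rw [Set.indicator_of_notMem ht]
        have : ∀ s, F t s = 0 := by
          intro s
          simp only [hF]
          apply Set.indicator_of_notMem
          intro hmem
          exact ht ⟨hmem.1, lt_trans hmem.2.1 hmem.2.2⟩
        simp [lintegral_congr this]
      
    rw [lintegral_congr h1, lintegral_indicator measurableSet_Ioo]
  have hR : ∫⁻ s, ∫⁻ t, F t s = ∫⁻ s in Ioo 0 T, H s * ∫⁻ t in Ioo 0 s, g t := by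
    have h1 : ∀ s, (∫⁻ t, F t s)
        = (Ioo (0:ℝ) T).indicator (fun s => H s * ∫⁻ t in Ioo 0 s, g t) s := by
      intro s
      by_cases hs : s ∈ Ioo (0:ℝ) T
      · rw [Set.indicator_of_mem hs]
        have : ∀ t, F t s = (Ioo 0 s).indicator (fun t => H s * g t) t := by
          intro t
          by_cases ht : t ∈ Ioo (0:ℝ) s
          · rw [Set.indicator_of_mem ht]
            simp only [hF]
            rw [Set.indicator_of_mem (show (t, s) ∈ A from ⟨ht.1, ht.2, hs.2⟩)]
            exact mul_comm _ _
          · rw [Set.indicator_of_notMem ht]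
            simp only [hF]
            apply Set.indicator_of_notMem
            intro hmem
            exact ht ⟨hmem.1, hmem.2.1⟩
        rw [lintegral_congr this, lintegral_indicator measurableSet_Ioo]
        rw [lintegral_const_mul _ hg]
      · rw [Set.indicator_of_notMem hs]
        have : ∀ t, F t s = 0 := by
          intro t
          simp only [hF]
          apply Set.indicator_of_notMem
          intro hmem
          exact hs ⟨lt_trans hmem.1 hmem.2.1, hmem.2.2⟩
        simp [lintegral_congr this]
    rw [lintegral_congr h1, lintegral_indicator measurableSet_Ioo]
  rw [← hL, ← hR, key]

private lemma meas_w {T c : ℝ} : Measurable fun x : ℝ => ENNReal.ofReal ((T - x) ^ c) :=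
  ((measurable_const.sub measurable_id).pow measurable_const).ennreal_ofReal

/-- pointwise Hölder step for the tail Hardy inequality -/
private lemma holder_tail {T θ p : ℝ} (hθ : 0 < θ) (hp : 1 ≤ p)
    (h : ℝ → ℝ≥0∞) (hm : Measurable h) :
    ∃ K : ℝ, 0 < K ∧ ∀ t ∈ Ioo (0:ℝ) T,
      (∫⁻ s in Ioo t T, h s) ^ p
        ≤ ENNReal.ofReal (K * (T - t) ^ (θ * p / 2)) *
            ∫⁻ s in Ioo t T, h s ^ p * ENNReal.ofReal ((T - s) ^ (p - 1 - θ * p / 2)) := by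
  have hppos : 0 < p := lt_of_lt_of_le one_pos hp
  rcases eq_or_lt_of_le hp with hp1 | hp1
  · -- p = 1
    subst hp1
    refine ⟨1, one_pos, fun t ht => ?_⟩
    have hTt : 0 < T - t := sub_pos.2 ht.2
    simp only [ENNReal.rpow_one, one_mul]
    rw [← lintegral_const_mul' _ _ ENNReal.ofReal_ne_top]
    apply lintegral_mono_ae
    rw [ae_restrict_iff' measurableSet_Ioo]
    apply ae_of_all
    intro s hs
    have hTs : 0 < T - s := sub_pos.2 hs.2
    have h1 : (1 : ℝ≥0∞) ≤ ENNReal.ofReal ((T - t) ^ (θ * 1 / 2)) *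
        ENNReal.ofReal ((T - s) ^ (1 - 1 - θ * 1 / 2)) := by
      rw [← ENNReal.ofReal_mul (Real.rpow_nonneg hTt.le _), ← ENNReal.ofReal_one]
      apply ENNReal.ofReal_le_ofReal
      calc (1:ℝ) = (T - s) ^ (θ * 1 / 2) * (T - s) ^ (1 - 1 - θ * 1 / 2) := by
            rw [← Real.rpow_add hTs]; norm_num
        _ ≤ (T - t) ^ (θ * 1 / 2) * (T - s) ^ (1 - 1 - θ * 1 / 2) := by
            apply mul_le_mul_of_nonneg_right
              (Real.rpow_le_rpow hTs.le (by linarith [hs.1]) (by positivity))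
              (Real.rpow_nonneg hTs.le _)
    calc h s = 1 * h s := (one_mul _).symm
      _ ≤ (ENNReal.ofReal ((T - t) ^ (θ * 1 / 2)) *
            ENNReal.ofReal ((T - s) ^ (1 - 1 - θ * 1 / 2))) * h s := mul_le_mul_left h1 _
      _ = ENNReal.ofReal ((T - t) ^ (θ * 1 / 2)) *
            (h s * ENNReal.ofReal ((T - s) ^ (1 - 1 - θ * 1 / 2))) := by ring
  · -- 1 < p
    set b : ℝ := p - 1 - θ * p / 2 with hb
    set p' : ℝ := Real.conjExponent p with hp'
    have hpq : p.HolderConjugate p' := Real.HolderConjugate.conjExponent hp1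
    have hp'def : p' = p / (p - 1) := rfl
    have hpm1 : 0 < p - 1 := by linarith
    set γ : ℝ := θ * p / (2 * (p - 1)) - 1 with hγdef
    have hγ : -1 < γ := by
      have : 0 < θ * p / (2 * (p - 1)) := by positivity
      simp only [hγdef]; linarith
    have hγ1 : γ + 1 = θ * p / (2 * (p - 1)) := by simp only [hγdef]; ring
    have hγ1pos : 0 < γ + 1 := by rw [hγ1]; positivity
    refine ⟨((γ + 1) ^ (p - 1))⁻¹, by positivity, fun t ht => ?_⟩
    have hTt : 0 < T - t := sub_pos.2 ht.2
    set fs : ℝ → ℝ≥0∞ := fun s => h s * ENNReal.ofReal ((T - s) ^ (b / p)) with hfs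
    set gs : ℝ → ℝ≥0∞ := fun s => ENNReal.ofReal ((T - s) ^ (-(b / p))) with hgs
    have hfm : Measurable fs := hm.mul meas_w
    have hgm : Measurable gs := meas_w
    have heq : ∫⁻ s in Ioo t T, h s = ∫⁻ s in Ioo t T, (fs * gs) s := by
      apply setLIntegral_congr_fun_ae measurableSet_Ioo
      apply ae_of_all
      intro s hs
      have hTs : 0 < T - s := sub_pos.2 hs.2
      simp only [hfs, hgs, Pi.mul_apply, mul_assoc, ← ENNReal.ofReal_mul (Real.rpow_nonneg hTs.le _),
        ← Real.rpow_add hTs]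
      norm_num
    have holder := ENNReal.lintegral_mul_le_Lp_mul_Lq (volume.restrict (Ioo t T)) hpq
      hfm.aemeasurable hgm.aemeasurable
    have e1 : ∫⁻ s in Ioo t T, fs s ^ p
        = ∫⁻ s in Ioo t T, h s ^ p * ENNReal.ofReal ((T - s) ^ b) := by
      apply setLIntegral_congr_fun_ae measurableSet_Ioo
      apply ae_of_all
      intro s hs
      have hTs : 0 < T - s := sub_pos.2 hs.2
      simp only [hfs]
      rw [ENNReal.mul_rpow_of_nonneg _ _ hppos.le,
        ENNReal.ofReal_rpow_of_pos (Real.rpow_pos_of_pos hTs _),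
        ← Real.rpow_mul hTs.le, div_mul_cancel₀ _ hppos.ne']
    have e2 : ∫⁻ s in Ioo t T, gs s ^ p' ≤ ENNReal.ofReal ((T - t) ^ (γ + 1) / (γ + 1)) := by
      have e2' : ∫⁻ s in Ioo t T, gs s ^ p'
          = ∫⁻ s in Ioo t T, ENNReal.ofReal ((T - s) ^ γ) := by
        apply setLIntegral_congr_fun_ae measurableSet_Ioo
        apply ae_of_all
        intro s hs
        have hTs : 0 < T - s := sub_pos.2 hs.2
        simp only [hgs]
        rw [ENNReal.ofReal_rpow_of_pos (Real.rpow_pos_of_pos hTs _), ← Real.rpow_mul hTs.le]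
        congr 2
        rw [hp'def, hγdef, hb]
        field_simp
        ring
      rw [e2']
      exact weightB hγ ht.2
    -- combine
    have step1 : ∫⁻ s in Ioo t T, h s
        ≤ (∫⁻ s in Ioo t T, h s ^ p * ENNReal.ofReal ((T - s) ^ b)) ^ (1 / p) *
            (ENNReal.ofReal ((T - t) ^ (γ + 1) / (γ + 1))) ^ (1 / p') := by
      rw [heq]
      refine holder.trans ?_
      rw [e1]
      exact mul_le_mul_right (ENNReal.rpow_le_rpow e2 hpq.symm.one_div_nonneg) _
    calc (∫⁻ s in Ioo t T, h s) ^ p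
        ≤ ((∫⁻ s in Ioo t T, h s ^ p * ENNReal.ofReal ((T - s) ^ b)) ^ (1 / p) *
            (ENNReal.ofReal ((T - t) ^ (γ + 1) / (γ + 1))) ^ (1 / p')) ^ p :=
          ENNReal.rpow_le_rpow step1 hppos.le
      _ = (∫⁻ s in Ioo t T, h s ^ p * ENNReal.ofReal ((T - s) ^ b)) *
            (ENNReal.ofReal ((T - t) ^ (γ + 1) / (γ + 1))) ^ (p - 1) := by
          rw [ENNReal.mul_rpow_of_nonneg _ _ hppos.le, ← ENNReal.rpow_mul, ← ENNReal.rpow_mul,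
            one_div_mul_cancel hppos.ne', ENNReal.rpow_one]
          congr 2
          rw [hp'def]
          field_simp
      _ = ENNReal.ofReal (((γ + 1) ^ (p - 1))⁻¹ * (T - t) ^ (θ * p / 2)) *
            ∫⁻ s in Ioo t T, h s ^ p * ENNReal.ofReal ((T - s) ^ b) := by
          rw [mul_comm]
          congr 1
          rw [ENNReal.ofReal_rpow_of_pos (by positivity),
            Real.div_rpow (Real.rpow_nonneg hTt.le _) hγ1pos.le,
            ← Real.rpow_mul hTt.le]
          rw [show (γ + 1) * (p - 1) = θ * p / 2 by rw [hγ1]; field_simp]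
          rw [div_eq_inv_mul]

lemma hardy_tail {T θ p : ℝ} (hT : 0 < T) (hθ : 0 < θ) (hp : 1 ≤ p)
    (h : ℝ → ℝ≥0∞) (hm : Measurable h) :
    ∃ C : ℝ, 0 < C ∧
      ∫⁻ t in Ioo 0 T, (∫⁻ s in Ioo t T, h s) ^ p * ENNReal.ofReal ((T - t) ^ (-θ * p - 1))
        ≤ ENNReal.ofReal C *
            ∫⁻ s in Ioo 0 T, h s ^ p * ENNReal.ofReal ((T - s) ^ ((1 - θ) * p - 1)) := by
  have hppos : 0 < p := lt_of_lt_of_le one_pos hp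
  obtain ⟨K, hKpos, star⟩ := holder_tail (T := T) hθ hp h hm
  set b : ℝ := p - 1 - θ * p / 2 with hb
  set H : ℝ → ℝ≥0∞ := fun s => h s ^ p * ENNReal.ofReal ((T - s) ^ b) with hH
  have hHm : Measurable H := (hm.pow measurable_const).mul meas_w
  set w : ℝ → ℝ≥0∞ := fun t => ENNReal.ofReal ((T - t) ^ (-θ * p / 2 - 1)) with hw
  have hwm : Measurable w := meas_w
  refine ⟨K * (2 / (θ * p)), by positivity, ?_⟩
  calc ∫⁻ t in Ioo 0 T, (∫⁻ s in Ioo t T, h s) ^ p * ENNReal.ofReal ((T - t) ^ (-θ * p - 1))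
      ≤ ∫⁻ t in Ioo 0 T, ENNReal.ofReal K * (w t * ∫⁻ s in Ioo t T, H s) := by
        apply lintegral_mono_ae
        rw [ae_restrict_iff' measurableSet_Ioo]
        apply ae_of_all
        intro t ht
        have hTt : 0 < T - t := sub_pos.2 ht.2
        calc (∫⁻ s in Ioo t T, h s) ^ p * ENNReal.ofReal ((T - t) ^ (-θ * p - 1))
            ≤ (ENNReal.ofReal (K * (T - t) ^ (θ * p / 2)) * ∫⁻ s in Ioo t T, H s) *
                ENNReal.ofReal ((T - t) ^ (-θ * p - 1)) :=
              mul_le_mul_left (star t ht) _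
          _ = ENNReal.ofReal K * (w t * ∫⁻ s in Ioo t T, H s) := by
              rw [ENNReal.ofReal_mul hKpos.le,
                show w t = ENNReal.ofReal ((T - t) ^ (-θ * p / 2 - 1)) from rfl]
              rw [show ENNReal.ofReal ((T - t) ^ (-θ * p / 2 - 1))
                  = ENNReal.ofReal ((T - t) ^ (θ * p / 2)) *
                    ENNReal.ofReal ((T - t) ^ (-θ * p - 1)) by
                rw [← ENNReal.ofReal_mul (Real.rpow_nonneg hTt.le _), ← Real.rpow_add hTt]
                norm_num; ring_nf]
              ring
    _ = ENNReal.ofReal K * ∫⁻ t in Ioo 0 T, w t * ∫⁻ s in Ioo t T, H s :=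
        lintegral_const_mul' _ _ ENNReal.ofReal_ne_top
    _ = ENNReal.ofReal K * ∫⁻ s in Ioo 0 T, H s * ∫⁻ t in Ioo 0 s, w t := by
        rw [swap_lt w H hwm hHm]
    _ ≤ ENNReal.ofReal K * ∫⁻ s in Ioo 0 T, H s *
          ENNReal.ofReal ((T - s) ^ (-(θ * p / 2)) / (θ * p / 2)) := by
        apply mul_le_mul_right
        apply lintegral_mono_ae
        rw [ae_restrict_iff' measurableSet_Ioo]
        apply ae_of_all
        intro s hs
        apply mul_le_mul_right
        have hα : -θ * p / 2 - 1 < -1 := by nlinarith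
        have := weightA (T := T) hα hs.1.le hs.2
        rw [show -θ * p / 2 - 1 + 1 = -(θ * p / 2) by ring] at this
        rw [show -(-(θ * p / 2)) = θ * p / 2 by ring] at this
        exact this
    _ = ENNReal.ofReal (K * (2 / (θ * p))) *
          ∫⁻ s in Ioo 0 T, h s ^ p * ENNReal.ofReal ((T - s) ^ ((1 - θ) * p - 1)) := by
        rw [ENNReal.ofReal_mul hKpos.le, mul_assoc]
        congr 1
        rw [← lintegral_const_mul' _ _ ENNReal.ofReal_ne_top]
        apply setLIntegral_congr_fun_ae measurableSet_Ioo
        apply ae_of_all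
        intro s hs
        have hTs : 0 < T - s := sub_pos.2 hs.2
        have hre : (T - s) ^ b * ((T - s) ^ (-(θ * p / 2)) / (θ * p / 2))
            = 2 / (θ * p) * (T - s) ^ ((1 - θ) * p - 1) := by
          rw [← mul_div_assoc, ← Real.rpow_add hTs,
            show b + -(θ * p / 2) = (1 - θ) * p - 1 by rw [hb]; ring]
          field_simp
        calc H s * ENNReal.ofReal ((T - s) ^ (-(θ * p / 2)) / (θ * p / 2))
            = h s ^ p * (ENNReal.ofReal ((T - s) ^ b) *
                ENNReal.ofReal ((T - s) ^ (-(θ * p / 2)) / (θ * p / 2))) := by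
              simp only [hH]; ring
          _ = h s ^ p * ENNReal.ofReal ((T - s) ^ b * ((T - s) ^ (-(θ * p / 2)) / (θ * p / 2))) := by
              rw [ENNReal.ofReal_mul (Real.rpow_nonneg hTs.le _)]
          _ = h s ^ p * (ENNReal.ofReal (2 / (θ * p)) *
                ENNReal.ofReal ((T - s) ^ ((1 - θ) * p - 1))) := by
              rw [hre, ENNReal.ofReal_mul (by positivity)]
          _ = ENNReal.ofReal (2 / (θ * p)) *
                (h s ^ p * ENNReal.ofReal ((T - s) ^ ((1 - θ) * p - 1))) := by ring

/-- pointwise Hölder step for the initial-segment Hardy inequality -/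
private lemma holder_init {T θ p : ℝ} (hθ1 : θ < 1) (hp : 1 ≤ p)
    (h : ℝ → ℝ≥0∞) (hm : Measurable h) :
    ∃ K : ℝ, 0 < K ∧ ∀ t ∈ Ioo (0:ℝ) T,
      (∫⁻ u in Ioo 0 t, h u) ^ p
        ≤ ENNReal.ofReal (K * (T - t) ^ (-((1 - θ) * p / 2))) *
            ∫⁻ u in Ioo 0 t, h u ^ p * ENNReal.ofReal ((T - u) ^ (p - 1 + (1 - θ) * p / 2)) := by
  have hppos : 0 < p := lt_of_lt_of_le one_pos hp
  rcases eq_or_lt_of_le hp with hp1 | hp1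
  · -- p = 1
    subst hp1
    refine ⟨1, one_pos, fun t ht => ?_⟩
    have hTt : 0 < T - t := sub_pos.2 ht.2
    simp only [ENNReal.rpow_one, one_mul]
    rw [← lintegral_const_mul' _ _ ENNReal.ofReal_ne_top]
    apply lintegral_mono_ae
    rw [ae_restrict_iff' measurableSet_Ioo]
    apply ae_of_all
    intro u hu
    have hTu : 0 < T - u := by have := hu.2; have := ht.2; simp only [sub_pos]; linarith
    have h1 : (1 : ℝ≥0∞) ≤ ENNReal.ofReal ((T - t) ^ (-((1 - θ) * 1 / 2))) *
        ENNReal.ofReal ((T - u) ^ (1 - 1 + (1 - θ) * 1 / 2)) := by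
      rw [← ENNReal.ofReal_mul (Real.rpow_nonneg hTt.le _), ← ENNReal.ofReal_one]
      apply ENNReal.ofReal_le_ofReal
      calc (1:ℝ) = (T - t) ^ (-((1 - θ) * 1 / 2)) * (T - t) ^ (1 - 1 + (1 - θ) * 1 / 2) := by
            rw [← Real.rpow_add hTt]; norm_num
        _ ≤ (T - t) ^ (-((1 - θ) * 1 / 2)) * (T - u) ^ (1 - 1 + (1 - θ) * 1 / 2) := by
            apply mul_le_mul_of_nonneg_left
              (Real.rpow_le_rpow hTt.le (by have := hu.2; linarith) (by linarith))
              (Real.rpow_nonneg hTt.le _)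
    calc h u = 1 * h u := (one_mul _).symm
      _ ≤ (ENNReal.ofReal ((T - t) ^ (-((1 - θ) * 1 / 2))) *
            ENNReal.ofReal ((T - u) ^ (1 - 1 + (1 - θ) * 1 / 2))) * h u := mul_le_mul_left h1 _
      _ = ENNReal.ofReal ((T - t) ^ (-((1 - θ) * 1 / 2))) *
            (h u * ENNReal.ofReal ((T - u) ^ (1 - 1 + (1 - θ) * 1 / 2))) := by ring
  · -- 1 < p
    set b : ℝ := p - 1 + (1 - θ) * p / 2 with hb
    set p' : ℝ := Real.conjExponent p with hp'
    have hpq : p.HolderConjugate p' := Real.HolderConjugate.conjExponent hp1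
    have hp'def : p' = p / (p - 1) := rfl
    have hpm1 : 0 < p - 1 := by linarith
    set α : ℝ := -1 - (1 - θ) * p / (2 * (p - 1)) with hαdef
    have hm2 : 0 < (1 - θ) * p / (2 * (p - 1)) := by
      have h1θ : 0 < 1 - θ := by linarith
      positivity
    have hα : α < -1 := by simp only [hαdef]; linarith
    have hα1 : -(α + 1) = (1 - θ) * p / (2 * (p - 1)) := by simp only [hαdef]; ring
    have hα1pos : 0 < -(α + 1) := by rw [hα1]; exact hm2
    refine ⟨((-(α + 1)) ^ (p - 1))⁻¹, by positivity, fun t ht => ?_⟩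
    have hTt : 0 < T - t := sub_pos.2 ht.2
    set fs : ℝ → ℝ≥0∞ := fun u => h u * ENNReal.ofReal ((T - u) ^ (b / p)) with hfs
    set gs : ℝ → ℝ≥0∞ := fun u => ENNReal.ofReal ((T - u) ^ (-(b / p))) with hgs
    have hfm : Measurable fs := hm.mul meas_w
    have hgm : Measurable gs := meas_w
    have hsubTu : ∀ u ∈ Ioo (0:ℝ) t, 0 < T - u := by
      intro u hu
      have := hu.2; have := ht.2
      simp only [sub_pos]; linarith
    have heq : ∫⁻ u in Ioo 0 t, h u = ∫⁻ u in Ioo 0 t, (fs * gs) u := by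
      apply setLIntegral_congr_fun_ae measurableSet_Ioo
      apply ae_of_all
      intro u hu
      have hTu := hsubTu u hu
      simp only [hfs, hgs, Pi.mul_apply, mul_assoc,
        ← ENNReal.ofReal_mul (Real.rpow_nonneg hTu.le _), ← Real.rpow_add hTu]
      norm_num
    have holder := ENNReal.lintegral_mul_le_Lp_mul_Lq (volume.restrict (Ioo 0 t)) hpq
      hfm.aemeasurable hgm.aemeasurable
    have e1 : ∫⁻ u in Ioo 0 t, fs u ^ p
        = ∫⁻ u in Ioo 0 t, h u ^ p * ENNReal.ofReal ((T - u) ^ b) := by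
      apply setLIntegral_congr_fun_ae measurableSet_Ioo
      apply ae_of_all
      intro u hu
      have hTu := hsubTu u hu
      simp only [hfs]
      rw [ENNReal.mul_rpow_of_nonneg _ _ hppos.le,
        ENNReal.ofReal_rpow_of_pos (Real.rpow_pos_of_pos hTu _),
        ← Real.rpow_mul hTu.le, div_mul_cancel₀ _ hppos.ne']
    have e2 : ∫⁻ u in Ioo 0 t, gs u ^ p' ≤ ENNReal.ofReal ((T - t) ^ (α + 1) / (-(α + 1))) := by
      have e2' : ∫⁻ u in Ioo 0 t, gs u ^ p'
          = ∫⁻ u in Ioo 0 t, ENNReal.ofReal ((T - u) ^ α) := by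
        apply setLIntegral_congr_fun_ae measurableSet_Ioo
        apply ae_of_all
        intro u hu
        have hTu := hsubTu u hu
        simp only [hgs]
        rw [ENNReal.ofReal_rpow_of_pos (Real.rpow_pos_of_pos hTu _), ← Real.rpow_mul hTu.le]
        congr 2
        rw [hp'def, hαdef, hb]
        field_simp
        ring
      rw [e2']
      exact weightA hα ht.1.le ht.2
    have step1 : ∫⁻ u in Ioo 0 t, h u
        ≤ (∫⁻ u in Ioo 0 t, h u ^ p * ENNReal.ofReal ((T - u) ^ b)) ^ (1 / p) *
            (ENNReal.ofReal ((T - t) ^ (α + 1) / (-(α + 1)))) ^ (1 / p') := by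
      rw [heq]
      refine holder.trans ?_
      rw [e1]
      exact mul_le_mul_right (ENNReal.rpow_le_rpow e2 hpq.symm.one_div_nonneg) _
    calc (∫⁻ u in Ioo 0 t, h u) ^ p
        ≤ ((∫⁻ u in Ioo 0 t, h u ^ p * ENNReal.ofReal ((T - u) ^ b)) ^ (1 / p) *
            (ENNReal.ofReal ((T - t) ^ (α + 1) / (-(α + 1)))) ^ (1 / p')) ^ p :=
          ENNReal.rpow_le_rpow step1 hppos.le
      _ = (∫⁻ u in Ioo 0 t, h u ^ p * ENNReal.ofReal ((T - u) ^ b)) *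
            (ENNReal.ofReal ((T - t) ^ (α + 1) / (-(α + 1)))) ^ (p - 1) := by
          rw [ENNReal.mul_rpow_of_nonneg _ _ hppos.le, ← ENNReal.rpow_mul, ← ENNReal.rpow_mul,
            one_div_mul_cancel hppos.ne', ENNReal.rpow_one]
          congr 2
          rw [hp'def]
          field_simp
      _ = ENNReal.ofReal (((-(α + 1)) ^ (p - 1))⁻¹ * (T - t) ^ (-((1 - θ) * p / 2))) *
            ∫⁻ u in Ioo 0 t, h u ^ p * ENNReal.ofReal ((T - u) ^ b) := by
          rw [mul_comm]
          congr 1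
          rw [ENNReal.ofReal_rpow_of_pos (by positivity),
            Real.div_rpow (Real.rpow_nonneg hTt.le _) hα1pos.le,
            ← Real.rpow_mul hTt.le]
          rw [show (α + 1) * (p - 1) = -((1 - θ) * p / 2) by
            rw [show α + 1 = -(-(α+1)) by ring, hα1]; field_simp]
          rw [div_eq_inv_mul]

lemma hardy_init {T θ p : ℝ} (hT : 0 < T) (hθ1 : θ < 1) (hp : 1 ≤ p)
    (h : ℝ → ℝ≥0∞) (hm : Measurable h) :
    ∃ C : ℝ, 0 < C ∧
      ∫⁻ t in Ioo 0 T, (∫⁻ u in Ioo 0 t, h u) ^ p * ENNReal.ofReal ((T - t) ^ ((1 - θ) * p - 1))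
        ≤ ENNReal.ofReal C *
            ∫⁻ u in Ioo 0 T, h u ^ p * ENNReal.ofReal ((T - u) ^ ((2 - θ) * p - 1)) := by
  have hppos : 0 < p := lt_of_lt_of_le one_pos hp
  have h1θ : 0 < 1 - θ := by linarith
  obtain ⟨K, hKpos, star⟩ := holder_init (T := T) hθ1 hp h hm
  set b : ℝ := p - 1 + (1 - θ) * p / 2 with hb
  set H : ℝ → ℝ≥0∞ := fun u => h u ^ p * ENNReal.ofReal ((T - u) ^ b) with hH
  have hHm : Measurable H := (hm.pow measurable_const).mul meas_w
  set w : ℝ → ℝ≥0∞ := fun t => ENNReal.ofReal ((T - t) ^ ((1 - θ) * p / 2 - 1)) with hw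
  have hwm : Measurable w := meas_w
  refine ⟨K * (2 / ((1 - θ) * p)), by positivity, ?_⟩
  calc ∫⁻ t in Ioo 0 T, (∫⁻ u in Ioo 0 t, h u) ^ p * ENNReal.ofReal ((T - t) ^ ((1 - θ) * p - 1))
      ≤ ∫⁻ t in Ioo 0 T, ENNReal.ofReal K * (w t * ∫⁻ u in Ioo 0 t, H u) := by
        apply lintegral_mono_ae
        rw [ae_restrict_iff' measurableSet_Ioo]
        apply ae_of_all
        intro t ht
        have hTt : 0 < T - t := sub_pos.2 ht.2
        calc (∫⁻ u in Ioo 0 t, h u) ^ p * ENNReal.ofReal ((T - t) ^ ((1 - θ) * p - 1))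
            ≤ (ENNReal.ofReal (K * (T - t) ^ (-((1 - θ) * p / 2))) * ∫⁻ u in Ioo 0 t, H u) *
                ENNReal.ofReal ((T - t) ^ ((1 - θ) * p - 1)) :=
              mul_le_mul_left (star t ht) _
          _ = ENNReal.ofReal K * (w t * ∫⁻ u in Ioo 0 t, H u) := by
              rw [ENNReal.ofReal_mul hKpos.le,
                show w t = ENNReal.ofReal ((T - t) ^ ((1 - θ) * p / 2 - 1)) from rfl]
              rw [show ENNReal.ofReal ((T - t) ^ ((1 - θ) * p / 2 - 1))
                  = ENNReal.ofReal ((T - t) ^ (-((1 - θ) * p / 2))) *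
                    ENNReal.ofReal ((T - t) ^ ((1 - θ) * p - 1)) by
                rw [← ENNReal.ofReal_mul (Real.rpow_nonneg hTt.le _), ← Real.rpow_add hTt]
                norm_num; ring_nf]
              ring
    _ = ENNReal.ofReal K * ∫⁻ t in Ioo 0 T, w t * ∫⁻ u in Ioo 0 t, H u :=
        lintegral_const_mul' _ _ ENNReal.ofReal_ne_top
    _ = ENNReal.ofReal K * ∫⁻ u in Ioo 0 T, H u * ∫⁻ t in Ioo u T, w t := by
        rw [← swap_lt H w hHm hwm]
    _ ≤ ENNReal.ofReal K * ∫⁻ u in Ioo 0 T, H u *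
          ENNReal.ofReal ((T - u) ^ ((1 - θ) * p / 2) / ((1 - θ) * p / 2)) := by
        apply mul_le_mul_right
        apply lintegral_mono_ae
        rw [ae_restrict_iff' measurableSet_Ioo]
        apply ae_of_all
        intro u hu
        apply mul_le_mul_right
        have hγ : (-1 : ℝ) < (1 - θ) * p / 2 - 1 := by nlinarith
        have := weightB (T := T) hγ hu.2
        rw [show (1 - θ) * p / 2 - 1 + 1 = (1 - θ) * p / 2 by ring] at this
        exact this
    _ = ENNReal.ofReal (K * (2 / ((1 - θ) * p))) *
          ∫⁻ u in Ioo 0 T, h u ^ p * ENNReal.ofReal ((T - u) ^ ((2 - θ) * p - 1)) := by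
        rw [ENNReal.ofReal_mul hKpos.le, mul_assoc]
        congr 1
        rw [← lintegral_const_mul' _ _ ENNReal.ofReal_ne_top]
        apply setLIntegral_congr_fun_ae measurableSet_Ioo
        apply ae_of_all
        intro u hu
        have hTu : 0 < T - u := sub_pos.2 hu.2
        have hre : (T - u) ^ b * ((T - u) ^ ((1 - θ) * p / 2) / ((1 - θ) * p / 2))
            = 2 / ((1 - θ) * p) * (T - u) ^ ((2 - θ) * p - 1) := by
          rw [← mul_div_assoc, ← Real.rpow_add hTu,
            show b + (1 - θ) * p / 2 = (2 - θ) * p - 1 by rw [hb]; ring]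
          field_simp
        calc H u * ENNReal.ofReal ((T - u) ^ ((1 - θ) * p / 2) / ((1 - θ) * p / 2))
            = h u ^ p * (ENNReal.ofReal ((T - u) ^ b) *
                ENNReal.ofReal ((T - u) ^ ((1 - θ) * p / 2) / ((1 - θ) * p / 2))) := by
              simp only [hH]; ring
          _ = h u ^ p * ENNReal.ofReal ((T - u) ^ b *
                ((T - u) ^ ((1 - θ) * p / 2) / ((1 - θ) * p / 2))) := by
              rw [ENNReal.ofReal_mul (Real.rpow_nonneg hTu.le _)]
          _ = h u ^ p * (ENNReal.ofReal (2 / ((1 - θ) * p)) *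
                ENNReal.ofReal ((T - u) ^ ((2 - θ) * p - 1))) := by
              rw [hre, ENNReal.ofReal_mul (by positivity)]
          _ = ENNReal.ofReal (2 / ((1 - θ) * p)) *
                (h u ^ p * ENNReal.ofReal ((T - u) ^ ((2 - θ) * p - 1))) := by ring

private lemma dens_meas {T : ℝ} : Measurable fun t : ℝ => ENNReal.ofReal (1 / (T - t)) := by
  simp only [one_div]
  exact ((measurable_const.sub measurable_id).inv).ennreal_ofReal

private lemma phi_eq {T : ℝ} {q : ℝ≥0∞} (hq0 : q ≠ 0) (hqt : q ≠ ⊤) (f : ℝ → ℝ)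
    (hf : Measurable f) :
    Phi T q f = (∫⁻ t in Ioo 0 T,
        ENNReal.ofReal (1 / (T - t)) * (‖f t‖₊ : ℝ≥0∞) ^ q.toReal) ^ (1 / q.toReal) := by
  rw [Phi, eLpNorm_eq_lintegral_rpow_enorm_toReal hq0 hqt,
    lintegral_withDensity_eq_lintegral_mul _ dens_meas
      (hf.enorm.pow measurable_const),
    ← setLIntegral_congr (MeasureTheory.Ioo_ae_eq_Ico (a := (0:ℝ)) (b := T))]
  rfl

private lemma ae_of_Ico {T : ℝ} {P : ℝ → Prop} (h : ∀ t ∈ Ico (0:ℝ) T, P t) :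
    ∀ᵐ t ∂((volume.restrict (Ico (0:ℝ) T)).withDensity fun t => ENNReal.ofReal (1 / (T - t))),
      P t :=
  (withDensity_absolutelyContinuous _ _).ae_le
    ((ae_restrict_iff' measurableSet_Ico).2 (ae_of_all _ h))

private lemma of_ae_density {T : ℝ} {P : ℝ → Prop}
    (h : ∀ᵐ t ∂((volume.restrict (Ico (0:ℝ) T)).withDensity
        fun t => ENNReal.ofReal (1 / (T - t))), P t) :
    ∀ᵐ t ∂(volume.restrict (Ico (0:ℝ) T)), P t := by
  rw [ae_withDensity_iff dens_meas] at h
  filter_upwards [h, ae_restrict_mem measurableSet_Ico] with t h1 h2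
  exact h1 (ENNReal.ofReal_pos.2 (one_div_pos.2 (sub_pos.2 h2.2))).ne'

private lemma pointwise_id {T e r : ℝ} (hr : 0 ≤ r) (f : ℝ → ℝ) (s : ℝ)
    (hs : s ∈ Ioo (0:ℝ) T) (hnn : 0 ≤ f s) :
    ENNReal.ofReal (1 / (T - s)) * (‖(T - s) ^ e * f s‖₊ : ℝ≥0∞) ^ r
      = ENNReal.ofReal (f s) ^ r * ENNReal.ofReal ((T - s) ^ (e * r - 1)) := by
  have hTs : 0 < T - s := sub_pos.2 hs.2
  rw [← enorm_eq_nnnorm, Real.enorm_eq_ofReal (mul_nonneg (Real.rpow_nonneg hTs.le _) hnn),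
    ENNReal.ofReal_mul (Real.rpow_nonneg hTs.le _),
    ENNReal.mul_rpow_of_nonneg _ _ hr,
    ENNReal.ofReal_rpow_of_pos (Real.rpow_pos_of_pos hTs _), ← Real.rpow_mul hTs.le,
    show (1:ℝ) / (T - s) = (T - s) ^ (-1:ℝ) by rw [Real.rpow_neg_one, one_div]]
  rw [show ENNReal.ofReal ((T - s) ^ (-1:ℝ)) * (ENNReal.ofReal ((T - s) ^ (e * r)) *
      ENNReal.ofReal (f s) ^ r)
    = (ENNReal.ofReal ((T - s) ^ (-1:ℝ)) * ENNReal.ofReal ((T - s) ^ (e * r))) *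
      ENNReal.ofReal (f s) ^ r by ring]
  rw [← ENNReal.ofReal_mul (Real.rpow_nonneg hTs.le _), ← Real.rpow_add hTs,
    show -1 + e * r = e * r - 1 by ring]
  ring

private lemma ofReal_sq_rpow {x : ℝ} (hx : 0 ≤ x) (p : ℝ) :
    ENNReal.ofReal (x ^ 2) ^ p = ENNReal.ofReal x ^ (2 * p) := by
  rw [ENNReal.ofReal_pow hx 2, ← ENNReal.rpow_natCast (ENNReal.ofReal x) 2, ← ENNReal.rpow_mul]
  norm_num

lemma lemB {T θ : ℝ} (hT : 0 < T) (hθ0 : 0 < θ) {q : ℝ≥0∞} (hq : 2 ≤ q)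
    (f0 f1 : ℝ → ℝ) (h0m : Measurable f0) (h1m : Measurable f1)
    (h0nn : ∀ t ∈ Ico (0:ℝ) T, 0 ≤ f0 t) (h1nn : ∀ t ∈ Ico (0:ℝ) T, 0 ≤ f1 t)
    {D : ℝ} (hD : 0 < D)
    (hup : ∀ t ∈ Ico (0:ℝ) T, ENNReal.ofReal (f0 t) ≤
      ENNReal.ofReal D * (∫⁻ s in Ioc t T, ENNReal.ofReal (f1 s ^ 2)) ^ ((1:ℝ)/2)) :
    ∃ c : ℝ, 0 < c ∧
      Phi T q (fun t => (T - t) ^ (-(θ/2)) * f0 t)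
        ≤ ENNReal.ofReal c * Phi T q (fun s => (T - s) ^ ((1 - θ)/2) * f1 s) := by
  have hq0 : q ≠ 0 := by
    intro h; rw [h] at hq; exact absurd hq (by norm_num)
  by_cases hqt : q = ⊤
  · -- q = ∞
    subst hqt
    refine ⟨D * (1/θ) ^ ((1:ℝ)/2), by positivity, ?_⟩
    set M := Phi T ⊤ (fun s => (T - s) ^ ((1 - θ)/2) * f1 s) with hM
    by_cases hMtop : M = ⊤
    · rw [hMtop, ENNReal.mul_top (by positivity)]
      exact le_top
    have hae : ∀ᵐ s ∂(volume.restrict (Ico (0:ℝ) T)),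
        ENNReal.ofReal (f1 s) ≤ M * ENNReal.ofReal ((T - s) ^ (-((1 - θ)/2))) := by
      have h1 : ∀ᵐ s ∂(volume.restrict (Ico (0:ℝ) T)),
          (‖(T - s) ^ ((1 - θ)/2) * f1 s‖₊ : ℝ≥0∞) ≤ M := by
        apply of_ae_density
        exact ae_le_eLpNormEssSup
      filter_upwards [h1, ae_restrict_mem measurableSet_Ico] with s hs1 hs2
      have hTs : 0 < T - s := sub_pos.2 hs2.2
      have e1 : ENNReal.ofReal (f1 s)
          = (‖(T - s) ^ ((1 - θ)/2) * f1 s‖₊ : ℝ≥0∞) *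
              ENNReal.ofReal ((T - s) ^ (-((1 - θ)/2))) := by
        rw [← enorm_eq_nnnorm, Real.enorm_eq_ofReal (mul_nonneg (Real.rpow_nonneg hTs.le _) (h1nn s hs2)),
          ENNReal.ofReal_mul (Real.rpow_nonneg hTs.le _), mul_comm, ← mul_assoc,
          ← ENNReal.ofReal_mul (Real.rpow_nonneg hTs.le _), ← Real.rpow_add hTs]
        norm_num
      rw [e1]
      exact mul_le_mul_left hs1 _
    have hbound : ∀ t ∈ Ico (0:ℝ) T,
        (‖(T - t) ^ (-(θ/2)) * f0 t‖₊ : ℝ≥0∞)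
          ≤ ENNReal.ofReal (D * (1/θ) ^ ((1:ℝ)/2)) * M := by
      intro t ht
      have hTt : 0 < T - t := sub_pos.2 ht.2
      have hz : (0:ℝ) < (T - t) ^ θ / θ := by positivity
      have hJ : (∫⁻ s in Ioc t T, ENNReal.ofReal (f1 s ^ 2))
          ≤ M ^ (2:ℝ) * ENNReal.ofReal ((T - t) ^ θ / θ) := by
        rw [setLIntegral_congr (MeasureTheory.Ioo_ae_eq_Ioc (a := t) (b := T)).symm]
        calc ∫⁻ s in Ioo t T, ENNReal.ofReal (f1 s ^ 2)
            ≤ ∫⁻ s in Ioo t T, M ^ (2:ℝ) * ENNReal.ofReal ((T - s) ^ (θ - 1)) := by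
              apply lintegral_mono_ae
              have hsub : Ioo t T ⊆ Ico 0 T := fun s hs => ⟨le_trans ht.1 hs.1.le, hs.2⟩
              filter_upwards [ae_restrict_of_ae_restrict_of_subset hsub hae,
                ae_restrict_mem measurableSet_Ioo] with s hs1 hs2
              have hTs : 0 < T - s := sub_pos.2 hs2.2
              have hf1nn : 0 ≤ f1 s := h1nn s ⟨le_trans ht.1 hs2.1.le, hs2.2⟩
              calc ENNReal.ofReal (f1 s ^ 2) = ENNReal.ofReal (f1 s) ^ (2:ℝ) := by
                    rw [show (2:ℝ) = ((2:ℕ):ℝ) by norm_num, ENNReal.rpow_natCast,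
                      ← ENNReal.ofReal_pow hf1nn]
                _ ≤ (M * ENNReal.ofReal ((T - s) ^ (-((1 - θ)/2)))) ^ (2:ℝ) :=
                    ENNReal.rpow_le_rpow hs1 (by norm_num)
                _ = M ^ (2:ℝ) * ENNReal.ofReal ((T - s) ^ (θ - 1)) := by
                    rw [ENNReal.mul_rpow_of_nonneg _ _ (by norm_num : (0:ℝ) ≤ 2),
                      ENNReal.ofReal_rpow_of_pos (Real.rpow_pos_of_pos hTs _),
                      ← Real.rpow_mul hTs.le,
                      show -((1-θ)/2) * 2 = θ - 1 by ring]
          _ = M ^ (2:ℝ) * ∫⁻ s in Ioo t T, ENNReal.ofReal ((T - s) ^ (θ - 1)) :=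
              lintegral_const_mul' _ _
                (ENNReal.rpow_ne_top_of_nonneg (by norm_num) hMtop)
          _ ≤ M ^ (2:ℝ) * ENNReal.ofReal ((T - t) ^ θ / θ) := by
              apply mul_le_mul_right
              have := weightB (T := T) (show (-1:ℝ) < θ - 1 by linarith) ht.2
              rw [show θ - 1 + 1 = θ by ring] at this
              exact this
      have hup' := hup t ht
      have hJhalf : (∫⁻ s in Ioc t T, ENNReal.ofReal (f1 s ^ 2)) ^ ((1:ℝ)/2)
          ≤ M * ENNReal.ofReal (((T - t) ^ θ / θ) ^ ((1:ℝ)/2)) := by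
        calc (∫⁻ s in Ioc t T, ENNReal.ofReal (f1 s ^ 2)) ^ ((1:ℝ)/2)
            ≤ (M ^ (2:ℝ) * ENNReal.ofReal ((T - t) ^ θ / θ)) ^ ((1:ℝ)/2) :=
              ENNReal.rpow_le_rpow hJ (by norm_num)
          _ = M * ENNReal.ofReal (((T - t) ^ θ / θ) ^ ((1:ℝ)/2)) := by
              rw [ENNReal.mul_rpow_of_nonneg _ _ (by norm_num : (0:ℝ) ≤ 1/2),
                ← ENNReal.rpow_mul, ENNReal.ofReal_rpow_of_pos hz]
              norm_num
      have hnorm : (‖(T - t) ^ (-(θ/2)) * f0 t‖₊ : ℝ≥0∞)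
          = ENNReal.ofReal ((T - t) ^ (-(θ/2))) * ENNReal.ofReal (f0 t) := by
        rw [← enorm_eq_nnnorm, Real.enorm_eq_ofReal (mul_nonneg (Real.rpow_nonneg hTt.le _) (h0nn t ht)),
          ENNReal.ofReal_mul (Real.rpow_nonneg hTt.le _)]
      have hreal : (T - t) ^ (-(θ/2)) * ((T - t) ^ θ / θ) ^ ((1:ℝ)/2)
          = (1/θ) ^ ((1:ℝ)/2) := by
        rw [div_eq_mul_one_div ((T - t) ^ θ) θ,
          Real.mul_rpow (Real.rpow_nonneg hTt.le _) (by positivity),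
          ← Real.rpow_mul hTt.le, ← mul_assoc, ← Real.rpow_add hTt]
        rw [show -(θ/2) + θ * (1/2) = 0 by ring, Real.rpow_zero, one_mul]
      calc (‖(T - t) ^ (-(θ/2)) * f0 t‖₊ : ℝ≥0∞)
          = ENNReal.ofReal ((T - t) ^ (-(θ/2))) * ENNReal.ofReal (f0 t) := hnorm
        _ ≤ ENNReal.ofReal ((T - t) ^ (-(θ/2))) *
              (ENNReal.ofReal D * (M * ENNReal.ofReal (((T - t) ^ θ / θ) ^ ((1:ℝ)/2)))) :=
            mul_le_mul_right (hup'.trans (mul_le_mul_right hJhalf _)) _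
        _ = (ENNReal.ofReal D *
              (ENNReal.ofReal ((T - t) ^ (-(θ/2))) *
                ENNReal.ofReal (((T - t) ^ θ / θ) ^ ((1:ℝ)/2)))) * M := by ring
        _ = ENNReal.ofReal (D * (1/θ) ^ ((1:ℝ)/2)) * M := by
            rw [← ENNReal.ofReal_mul (Real.rpow_nonneg hTt.le _), hreal,
              ← ENNReal.ofReal_mul hD.le]
    rw [Phi, eLpNorm_exponent_top, eLpNormEssSup]
    exact essSup_le_of_ae_le _ (ae_of_Ico hbound)
  · -- q < ∞
    have hr2 : (2:ℝ) ≤ q.toReal := by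
      have := (ENNReal.toReal_le_toReal (by norm_num) hqt).2 hq
      simpa using this
    set r : ℝ := q.toReal with hr
    have hr0 : 0 < r := by linarith
    set p : ℝ := r / 2 with hp
    have hp1 : 1 ≤ p := by rw [hp]; linarith
    obtain ⟨C, hCpos, hardy⟩ := hardy_tail (T := T) hT hθ0 hp1
      (fun s => ENNReal.ofReal (f1 s ^ 2)) (h1m.pow_const 2).ennreal_ofReal
    refine ⟨(D ^ r * C) ^ (1/r), by positivity, ?_⟩
    have hm0 : Measurable fun t => (T - t) ^ (-(θ/2)) * f0 t :=
      (((measurable_const.sub measurable_id).pow measurable_const).mul h0m)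
    have hm1 : Measurable fun s => (T - s) ^ ((1 - θ)/2) * f1 s :=
      (((measurable_const.sub measurable_id).pow measurable_const).mul h1m)
    rw [phi_eq hq0 hqt _ hm0, phi_eq hq0 hqt _ hm1]
    have key : (∫⁻ t in Ioo 0 T,
          ENNReal.ofReal (1/(T - t)) * (‖(T - t) ^ (-(θ/2)) * f0 t‖₊ : ℝ≥0∞) ^ r)
        ≤ ENNReal.ofReal (D ^ r * C) *
          ∫⁻ s in Ioo 0 T,
            ENNReal.ofReal (1/(T - s)) * (‖(T - s) ^ ((1 - θ)/2) * f1 s‖₊ : ℝ≥0∞) ^ r := by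
      calc ∫⁻ t in Ioo 0 T,
            ENNReal.ofReal (1/(T - t)) * (‖(T - t) ^ (-(θ/2)) * f0 t‖₊ : ℝ≥0∞) ^ r
          ≤ ∫⁻ t in Ioo 0 T, ENNReal.ofReal (D ^ r) *
              ((∫⁻ s in Ioo t T, ENNReal.ofReal (f1 s ^ 2)) ^ p *
                ENNReal.ofReal ((T - t) ^ (-θ * p - 1))) := by
            apply lintegral_mono_ae
            rw [ae_restrict_iff' measurableSet_Ioo]
            apply ae_of_all
            intro t ht
            have hIco : t ∈ Ico (0:ℝ) T := ⟨ht.1.le, ht.2⟩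
            rw [pointwise_id hr0.le f0 t ht (h0nn t hIco)]
            have h1 : ENNReal.ofReal (f0 t) ^ r
                ≤ ENNReal.ofReal (D ^ r) * (∫⁻ s in Ioo t T, ENNReal.ofReal (f1 s ^ 2)) ^ p := by
              calc ENNReal.ofReal (f0 t) ^ r
                  ≤ (ENNReal.ofReal D *
                      (∫⁻ s in Ioc t T, ENNReal.ofReal (f1 s ^ 2)) ^ ((1:ℝ)/2)) ^ r :=
                    ENNReal.rpow_le_rpow (hup t hIco) hr0.le
                _ = ENNReal.ofReal (D ^ r) *
                      (∫⁻ s in Ioc t T, ENNReal.ofReal (f1 s ^ 2)) ^ p := by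
                    rw [ENNReal.mul_rpow_of_nonneg _ _ hr0.le, ← ENNReal.rpow_mul,
                      ENNReal.ofReal_rpow_of_pos hD,
                      show (1:ℝ)/2 * r = p by rw [hp]; ring]
                _ = ENNReal.ofReal (D ^ r) *
                      (∫⁻ s in Ioo t T, ENNReal.ofReal (f1 s ^ 2)) ^ p := by
                    rw [setLIntegral_congr (MeasureTheory.Ioo_ae_eq_Ioc (a := t) (b := T)).symm]
            calc ENNReal.ofReal (f0 t) ^ r * ENNReal.ofReal ((T - t) ^ (-(θ/2) * r - 1))
                ≤ (ENNReal.ofReal (D ^ r) *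
                    (∫⁻ s in Ioo t T, ENNReal.ofReal (f1 s ^ 2)) ^ p) *
                    ENNReal.ofReal ((T - t) ^ (-(θ/2) * r - 1)) := mul_le_mul_left h1 _
              _ = ENNReal.ofReal (D ^ r) *
                    ((∫⁻ s in Ioo t T, ENNReal.ofReal (f1 s ^ 2)) ^ p *
                      ENNReal.ofReal ((T - t) ^ (-θ * p - 1))) := by
                  rw [show -(θ/2) * r - 1 = -θ * p - 1 by rw [hp]; ring]
                  ring
        _ = ENNReal.ofReal (D ^ r) * ∫⁻ t in Ioo 0 T,
              (∫⁻ s in Ioo t T, ENNReal.ofReal (f1 s ^ 2)) ^ p *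
                ENNReal.ofReal ((T - t) ^ (-θ * p - 1)) :=
            lintegral_const_mul' _ _ ENNReal.ofReal_ne_top
        _ ≤ ENNReal.ofReal (D ^ r) * (ENNReal.ofReal C *
              ∫⁻ s in Ioo 0 T, ENNReal.ofReal (f1 s ^ 2) ^ p *
                ENNReal.ofReal ((T - s) ^ ((1 - θ) * p - 1))) :=
            mul_le_mul_right hardy _
        _ = ENNReal.ofReal (D ^ r * C) *
              ∫⁻ s in Ioo 0 T,
                ENNReal.ofReal (1/(T - s)) * (‖(T - s) ^ ((1 - θ)/2) * f1 s‖₊ : ℝ≥0∞) ^ r := by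
            rw [← mul_assoc, ← ENNReal.ofReal_mul (by positivity)]
            congr 1
            apply setLIntegral_congr_fun_ae measurableSet_Ioo
            apply ae_of_all
            intro s hs
            have hIco : s ∈ Ico (0:ℝ) T := ⟨hs.1.le, hs.2⟩
            rw [pointwise_id hr0.le f1 s hs (h1nn s hIco),
              ofReal_sq_rpow (h1nn s hIco) p,
              show 2 * p = r by rw [hp]; ring,
              show (1 - θ)/2 * r - 1 = (1 - θ) * p - 1 by rw [hp]; ring]
    calc (∫⁻ t in Ioo 0 T,
          ENNReal.ofReal (1/(T - t)) * (‖(T - t) ^ (-(θ/2)) * f0 t‖₊ : ℝ≥0∞) ^ r) ^ (1/r)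
        ≤ (ENNReal.ofReal (D ^ r * C) *
            ∫⁻ s in Ioo 0 T,
              ENNReal.ofReal (1/(T - s)) *
                (‖(T - s) ^ ((1 - θ)/2) * f1 s‖₊ : ℝ≥0∞) ^ r) ^ (1/r) :=
          ENNReal.rpow_le_rpow key (by positivity)
      _ = ENNReal.ofReal ((D ^ r * C) ^ (1/r)) *
            (∫⁻ s in Ioo 0 T,
              ENNReal.ofReal (1/(T - s)) *
                (‖(T - s) ^ ((1 - θ)/2) * f1 s‖₊ : ℝ≥0∞) ^ r) ^ (1/r) := by
          rw [ENNReal.mul_rpow_of_nonneg _ _ (by positivity : (0:ℝ) ≤ 1/r),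
            ENNReal.ofReal_rpow_of_pos (by positivity)]

lemma lemC {T θ : ℝ} (hT : 0 < T) (hθ1 : θ < 1) {q : ℝ≥0∞} (hq : 2 ≤ q)
    (f1 f2 : ℝ → ℝ) (h1m : Measurable f1) (h2m : Measurable f2)
    (h1nn : ∀ t ∈ Ico (0:ℝ) T, 0 ≤ f1 t) (h2nn : ∀ t ∈ Ico (0:ℝ) T, 0 ≤ f2 t)
    {A D : ℝ} (hA : 0 ≤ A) (hD : 0 < D)
    (hgrad : ∀ t ∈ Ico (0:ℝ) T, ENNReal.ofReal (f1 t) ≤ ENNReal.ofReal A +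
      ENNReal.ofReal D * (∫⁻ u in Ioc 0 t, ENNReal.ofReal (f2 u ^ 2)) ^ ((1:ℝ)/2)) :
    ∃ c : ℝ, 0 < c ∧
      Phi T q (fun t => (T - t) ^ ((1 - θ)/2) * f1 t)
        ≤ ENNReal.ofReal c * (ENNReal.ofReal A +
            Phi T q (fun u => (T - u) ^ ((2 - θ)/2) * f2 u)) := by
  have h1θ : 0 < 1 - θ := by linarith
  have hq0 : q ≠ 0 := by
    intro h; rw [h] at hq; exact absurd hq (by norm_num)
  by_cases hqt : q = ⊤
  · -- q = ∞
    subst hqt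
    refine ⟨T ^ ((1 - θ)/2) + D * (1/(1 - θ)) ^ ((1:ℝ)/2), by positivity, ?_⟩
    set M := Phi T ⊤ (fun u => (T - u) ^ ((2 - θ)/2) * f2 u) with hM
    by_cases hMtop : M = ⊤
    · rw [hMtop, add_top, ENNReal.mul_top (by positivity)]
      exact le_top
    have hae : ∀ᵐ u ∂(volume.restrict (Ico (0:ℝ) T)),
        ENNReal.ofReal (f2 u) ≤ M * ENNReal.ofReal ((T - u) ^ (-((2 - θ)/2))) := by
      have h1 : ∀ᵐ u ∂(volume.restrict (Ico (0:ℝ) T)),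
          (‖(T - u) ^ ((2 - θ)/2) * f2 u‖₊ : ℝ≥0∞) ≤ M := by
        apply of_ae_density
        exact ae_le_eLpNormEssSup
      filter_upwards [h1, ae_restrict_mem measurableSet_Ico] with u hu1 hu2
      have hTu : 0 < T - u := sub_pos.2 hu2.2
      have e1 : ENNReal.ofReal (f2 u)
          = (‖(T - u) ^ ((2 - θ)/2) * f2 u‖₊ : ℝ≥0∞) *
              ENNReal.ofReal ((T - u) ^ (-((2 - θ)/2))) := by
        rw [← enorm_eq_nnnorm, Real.enorm_eq_ofReal (mul_nonneg (Real.rpow_nonneg hTu.le _) (h2nn u hu2)),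
          ENNReal.ofReal_mul (Real.rpow_nonneg hTu.le _), mul_comm, ← mul_assoc,
          ← ENNReal.ofReal_mul (Real.rpow_nonneg hTu.le _), ← Real.rpow_add hTu]
        norm_num
      rw [e1]
      exact mul_le_mul_left hu1 _
    have hbound : ∀ t ∈ Ico (0:ℝ) T,
        (‖(T - t) ^ ((1 - θ)/2) * f1 t‖₊ : ℝ≥0∞)
          ≤ ENNReal.ofReal (T ^ ((1 - θ)/2) + D * (1/(1 - θ)) ^ ((1:ℝ)/2)) *
              (ENNReal.ofReal A + M) := by
      intro t ht
      have hTt : 0 < T - t := sub_pos.2 ht.2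
      have hz : (0:ℝ) < (T - t) ^ (θ - 1) / (1 - θ) := by positivity
      have hJ : (∫⁻ u in Ioc 0 t, ENNReal.ofReal (f2 u ^ 2))
          ≤ M ^ (2:ℝ) * ENNReal.ofReal ((T - t) ^ (θ - 1) / (1 - θ)) := by
        rw [setLIntegral_congr (MeasureTheory.Ioo_ae_eq_Ioc (a := (0:ℝ)) (b := t)).symm]
        calc ∫⁻ u in Ioo 0 t, ENNReal.ofReal (f2 u ^ 2)
            ≤ ∫⁻ u in Ioo 0 t, M ^ (2:ℝ) * ENNReal.ofReal ((T - u) ^ (θ - 2)) := by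
              apply lintegral_mono_ae
              have hsub : Ioo (0:ℝ) t ⊆ Ico 0 T :=
                fun u hu => ⟨hu.1.le, lt_of_lt_of_le hu.2 ht.2.le⟩
              filter_upwards [ae_restrict_of_ae_restrict_of_subset hsub hae,
                ae_restrict_mem measurableSet_Ioo] with u hu1 hu2
              have huIco : u ∈ Ico (0:ℝ) T := hsub hu2
              have hTu : 0 < T - u := sub_pos.2 huIco.2
              have hf2nn : 0 ≤ f2 u := h2nn u huIco
              calc ENNReal.ofReal (f2 u ^ 2) = ENNReal.ofReal (f2 u) ^ (2:ℝ) := by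
                    rw [show (2:ℝ) = ((2:ℕ):ℝ) by norm_num, ENNReal.rpow_natCast,
                      ← ENNReal.ofReal_pow hf2nn]
                _ ≤ (M * ENNReal.ofReal ((T - u) ^ (-((2 - θ)/2)))) ^ (2:ℝ) :=
                    ENNReal.rpow_le_rpow hu1 (by norm_num)
                _ = M ^ (2:ℝ) * ENNReal.ofReal ((T - u) ^ (θ - 2)) := by
                    rw [ENNReal.mul_rpow_of_nonneg _ _ (by norm_num : (0:ℝ) ≤ 2),
                      ENNReal.ofReal_rpow_of_pos (Real.rpow_pos_of_pos hTu _),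
                      ← Real.rpow_mul hTu.le,
                      show -((2 - θ)/2) * 2 = θ - 2 by ring]
          _ = M ^ (2:ℝ) * ∫⁻ u in Ioo 0 t, ENNReal.ofReal ((T - u) ^ (θ - 2)) :=
              lintegral_const_mul' _ _
                (ENNReal.rpow_ne_top_of_nonneg (by norm_num) hMtop)
          _ ≤ M ^ (2:ℝ) * ENNReal.ofReal ((T - t) ^ (θ - 1) / (1 - θ)) := by
              apply mul_le_mul_right
              have := weightA (T := T) (show θ - 2 < -1 by linarith) ht.1 ht.2
              rw [show θ - 2 + 1 = θ - 1 by ring] at this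
              rw [show -(θ - 1) = 1 - θ by ring] at this
              exact this
      have hJhalf : (∫⁻ u in Ioc 0 t, ENNReal.ofReal (f2 u ^ 2)) ^ ((1:ℝ)/2)
          ≤ M * ENNReal.ofReal (((T - t) ^ (θ - 1) / (1 - θ)) ^ ((1:ℝ)/2)) := by
        calc (∫⁻ u in Ioc 0 t, ENNReal.ofReal (f2 u ^ 2)) ^ ((1:ℝ)/2)
            ≤ (M ^ (2:ℝ) * ENNReal.ofReal ((T - t) ^ (θ - 1) / (1 - θ))) ^ ((1:ℝ)/2) :=
              ENNReal.rpow_le_rpow hJ (by norm_num)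
          _ = M * ENNReal.ofReal (((T - t) ^ (θ - 1) / (1 - θ)) ^ ((1:ℝ)/2)) := by
              rw [ENNReal.mul_rpow_of_nonneg _ _ (by norm_num : (0:ℝ) ≤ 1/2),
                ← ENNReal.rpow_mul, ENNReal.ofReal_rpow_of_pos hz]
              norm_num
      have hnorm : (‖(T - t) ^ ((1 - θ)/2) * f1 t‖₊ : ℝ≥0∞)
          = ENNReal.ofReal ((T - t) ^ ((1 - θ)/2)) * ENNReal.ofReal (f1 t) := by
        rw [← enorm_eq_nnnorm, Real.enorm_eq_ofReal (mul_nonneg (Real.rpow_nonneg hTt.le _) (h1nn t ht)),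
          ENNReal.ofReal_mul (Real.rpow_nonneg hTt.le _)]
      have hreal : (T - t) ^ ((1 - θ)/2) * ((T - t) ^ (θ - 1) / (1 - θ)) ^ ((1:ℝ)/2)
          = (1/(1 - θ)) ^ ((1:ℝ)/2) := by
        rw [div_eq_mul_one_div ((T - t) ^ (θ - 1)) (1 - θ),
          Real.mul_rpow (Real.rpow_nonneg hTt.le _) (by positivity),
          ← Real.rpow_mul hTt.le, ← mul_assoc, ← Real.rpow_add hTt,
          show (1 - θ)/2 + (θ - 1) * (1/2) = 0 by ring, Real.rpow_zero, one_mul]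
      calc (‖(T - t) ^ ((1 - θ)/2) * f1 t‖₊ : ℝ≥0∞)
          = ENNReal.ofReal ((T - t) ^ ((1 - θ)/2)) * ENNReal.ofReal (f1 t) := hnorm
        _ ≤ ENNReal.ofReal ((T - t) ^ ((1 - θ)/2)) *
              (ENNReal.ofReal A + ENNReal.ofReal D *
                (M * ENNReal.ofReal (((T - t) ^ (θ - 1) / (1 - θ)) ^ ((1:ℝ)/2)))) :=
            mul_le_mul_right ((hgrad t ht).trans
              (add_le_add_right (mul_le_mul_right hJhalf _) _)) _
        _ = ENNReal.ofReal ((T - t) ^ ((1 - θ)/2)) * ENNReal.ofReal A +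
              (ENNReal.ofReal D *
                (ENNReal.ofReal ((T - t) ^ ((1 - θ)/2)) *
                  ENNReal.ofReal (((T - t) ^ (θ - 1) / (1 - θ)) ^ ((1:ℝ)/2)))) * M := by
            ring
        _ ≤ ENNReal.ofReal (T ^ ((1 - θ)/2)) * ENNReal.ofReal A +
              ENNReal.ofReal (D * (1/(1 - θ)) ^ ((1:ℝ)/2)) * M := by
            apply add_le_add
            · apply mul_le_mul_left
              apply ENNReal.ofReal_le_ofReal
              exact Real.rpow_le_rpow hTt.le (by linarith [ht.1]) (by linarith)
            · apply mul_le_mul_left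
              rw [← ENNReal.ofReal_mul (Real.rpow_nonneg hTt.le _), hreal,
                ← ENNReal.ofReal_mul hD.le]
        _ ≤ ENNReal.ofReal (T ^ ((1 - θ)/2) + D * (1/(1 - θ)) ^ ((1:ℝ)/2)) *
              (ENNReal.ofReal A + M) := by
            have c1 : ENNReal.ofReal (T ^ ((1 - θ)/2))
                ≤ ENNReal.ofReal (T ^ ((1 - θ)/2) + D * (1/(1 - θ)) ^ ((1:ℝ)/2)) :=
              ENNReal.ofReal_le_ofReal (le_add_of_nonneg_right (by positivity))
            have c2 : ENNReal.ofReal (D * (1/(1 - θ)) ^ ((1:ℝ)/2))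
                ≤ ENNReal.ofReal (T ^ ((1 - θ)/2) + D * (1/(1 - θ)) ^ ((1:ℝ)/2)) :=
              ENNReal.ofReal_le_ofReal (le_add_of_nonneg_left (by positivity))
            calc ENNReal.ofReal (T ^ ((1 - θ)/2)) * ENNReal.ofReal A +
                  ENNReal.ofReal (D * (1/(1 - θ)) ^ ((1:ℝ)/2)) * M
                ≤ ENNReal.ofReal (T ^ ((1 - θ)/2) + D * (1/(1 - θ)) ^ ((1:ℝ)/2)) *
                    ENNReal.ofReal A +
                  ENNReal.ofReal (T ^ ((1 - θ)/2) + D * (1/(1 - θ)) ^ ((1:ℝ)/2)) * M :=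
                  add_le_add (mul_le_mul_left c1 _) (mul_le_mul_left c2 _)
              _ = ENNReal.ofReal (T ^ ((1 - θ)/2) + D * (1/(1 - θ)) ^ ((1:ℝ)/2)) *
                    (ENNReal.ofReal A + M) := (mul_add _ _ _).symm
    rw [Phi, eLpNorm_exponent_top, eLpNormEssSup]
    exact essSup_le_of_ae_le _ (ae_of_Ico hbound)
  · -- q < ∞
    have hr2 : (2:ℝ) ≤ q.toReal := by
      have := (ENNReal.toReal_le_toReal (by norm_num) hqt).2 hq
      simpa using this
    set r : ℝ := q.toReal with hr
    have hr0 : 0 < r := by linarith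
    have hr1 : 1 ≤ r := by linarith
    set p : ℝ := r / 2 with hp
    have hp1 : 1 ≤ p := by rw [hp]; linarith
    set h2 : ℝ → ℝ≥0∞ := fun u => ENNReal.ofReal (f2 u ^ 2) with hh2
    have hh2m : Measurable h2 := (h2m.pow_const 2).ennreal_ofReal
    obtain ⟨C, hCpos, hardy⟩ := hardy_init (T := T) hT hθ1 hp1 h2 hh2m
    set G : ℝ → ℝ≥0∞ := fun t => ∫⁻ u in Ioo 0 t, h2 u with hG
    have hGmono : Monotone G := by
      intro a b hab
      exact lintegral_mono_set (Ioo_subset_Ioo le_rfl hab)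
    have hGm : Measurable G := hGmono.measurable
    set W : ℝ → ℝ≥0∞ := fun t => ENNReal.ofReal ((T - t) ^ ((1 - θ) * p - 1)) with hW
    have hWm : Measurable W := meas_w
    set FA : ℝ → ℝ≥0∞ := fun _ => ENNReal.ofReal A with hFA
    set FG : ℝ → ℝ≥0∞ := fun t => ENNReal.ofReal D * G t ^ ((1:ℝ)/2) with hFG
    have hFAm : Measurable FA := measurable_const
    have hFGm : Measurable FG := (measurable_const.mul (hGm.pow measurable_const))
    set μw : Measure ℝ := (volume.restrict (Ioo 0 T)).withDensity W with hμw
    have hm1 : Measurable fun t => (T - t) ^ ((1 - θ)/2) * f1 t :=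
      (((measurable_const.sub measurable_id).pow measurable_const).mul h1m)
    have hm2 : Measurable fun u => (T - u) ^ ((2 - θ)/2) * f2 u :=
      (((measurable_const.sub measurable_id).pow measurable_const).mul h2m)
    rw [phi_eq hq0 hqt _ hm1, phi_eq hq0 hqt _ hm2]
    set I2 : ℝ≥0∞ := ∫⁻ u in Ioo 0 T,
      ENNReal.ofReal (1/(T - u)) * (‖(T - u) ^ ((2 - θ)/2) * f2 u‖₊ : ℝ≥0∞) ^ r with hI2
    have step1 : (∫⁻ t in Ioo 0 T,
          ENNReal.ofReal (1/(T - t)) * (‖(T - t) ^ ((1 - θ)/2) * f1 t‖₊ : ℝ≥0∞) ^ r)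
        ≤ ∫⁻ t, (FA t + FG t) ^ r ∂μw := by
      rw [hμw, lintegral_withDensity_eq_lintegral_mul _ hWm
        (show Measurable fun t => (FA t + FG t) ^ r from ((hFAm.add hFGm)).pow measurable_const)]
      apply lintegral_mono_ae
      rw [ae_restrict_iff' measurableSet_Ioo]
      apply ae_of_all
      intro t ht
      have hIco : t ∈ Ico (0:ℝ) T := ⟨ht.1.le, ht.2⟩
      rw [pointwise_id hr0.le f1 t ht (h1nn t hIco)]
      have hfb : ENNReal.ofReal (f1 t) ≤ FA t + FG t := by
        refine (hgrad t hIco).trans ?_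
        simp only [hFA, hFG]
        apply add_le_add_right
        apply mul_le_mul_right
        apply ENNReal.rpow_le_rpow _ (by norm_num)
        rw [setLIntegral_congr (MeasureTheory.Ioo_ae_eq_Ioc (a := (0:ℝ)) (b := t)).symm]
      calc ENNReal.ofReal (f1 t) ^ r * ENNReal.ofReal ((T - t) ^ ((1 - θ)/2 * r - 1))
          ≤ (FA t + FG t) ^ r * ENNReal.ofReal ((T - t) ^ ((1 - θ)/2 * r - 1)) :=
            mul_le_mul_left (ENNReal.rpow_le_rpow hfb hr0.le) _
        _ = (W * fun t => (FA t + FG t) ^ r) t := by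
            simp only [hW, Pi.mul_apply]
            rw [show (1 - θ)/2 * r - 1 = (1 - θ) * p - 1 by rw [hp]; ring]
            ring
    have stepA : (∫⁻ t, FA t ^ r ∂μw) ^ (1/r)
        ≤ ENNReal.ofReal ((T ^ ((1 - θ) * p) / ((1 - θ) * p)) ^ (1/r)) * ENNReal.ofReal A := by
      have e1 : ∫⁻ t, FA t ^ r ∂μw = ENNReal.ofReal A ^ r * ∫⁻ t in Ioo 0 T, W t := by
        rw [hμw, lintegral_withDensity_eq_lintegral_mul _ hWm
          (measurable_const.pow measurable_const)]
        rw [← lintegral_const_mul' _ _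
          (ENNReal.rpow_ne_top_of_nonneg hr0.le ENNReal.ofReal_ne_top)]
        apply lintegral_congr
        intro t
        simp only [hFA, Pi.mul_apply]
        ring
      have e2 : ∫⁻ t in Ioo 0 T, W t
          ≤ ENNReal.ofReal (T ^ ((1 - θ) * p) / ((1 - θ) * p)) := by
        have hγ : (-1:ℝ) < (1 - θ) * p - 1 := by nlinarith
        have := weightB (T := T) hγ hT
        rw [show (1 - θ) * p - 1 + 1 = (1 - θ) * p by ring, sub_zero] at this
        exact this
      calc (∫⁻ t, FA t ^ r ∂μw) ^ (1/r)
          ≤ (ENNReal.ofReal A ^ r * ENNReal.ofReal (T ^ ((1 - θ) * p) / ((1 - θ) * p))) ^ (1/r) := by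
            rw [e1]
            exact ENNReal.rpow_le_rpow (mul_le_mul_right e2 _) (by positivity)
        _ = ENNReal.ofReal ((T ^ ((1 - θ) * p) / ((1 - θ) * p)) ^ (1/r)) * ENNReal.ofReal A := by
            rw [ENNReal.mul_rpow_of_nonneg _ _ (by positivity : (0:ℝ) ≤ 1/r),
              ← ENNReal.rpow_mul, mul_one_div, div_self hr0.ne', ENNReal.rpow_one,
              ENNReal.ofReal_rpow_of_pos (by positivity), mul_comm]
    have stepG : (∫⁻ t, FG t ^ r ∂μw) ^ (1/r)
        ≤ ENNReal.ofReal ((D ^ r * C) ^ (1/r)) * I2 ^ (1/r) := by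
      have e1 : ∫⁻ t, FG t ^ r ∂μw
          = ENNReal.ofReal (D ^ r) *
              ∫⁻ t in Ioo 0 T, (∫⁻ u in Ioo 0 t, h2 u) ^ p *
                ENNReal.ofReal ((T - t) ^ ((1 - θ) * p - 1)) := by
        rw [hμw, lintegral_withDensity_eq_lintegral_mul _ hWm
          (hFGm.pow measurable_const)]
        rw [← lintegral_const_mul' _ _ ENNReal.ofReal_ne_top]
        apply lintegral_congr
        intro t
        simp only [hFG, Pi.mul_apply, hW, hG]
        rw [ENNReal.mul_rpow_of_nonneg _ _ hr0.le, ← ENNReal.rpow_mul,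
          ENNReal.ofReal_rpow_of_pos hD,
          show (1:ℝ)/2 * r = p by rw [hp]; ring]
        ring
      have e2 : (∫⁻ u in Ioo 0 T, h2 u ^ p * ENNReal.ofReal ((T - u) ^ ((2 - θ) * p - 1)))
          = I2 := by
        rw [hI2]
        apply setLIntegral_congr_fun_ae measurableSet_Ioo
        apply ae_of_all
        intro u hu
        have hIco : u ∈ Ico (0:ℝ) T := ⟨hu.1.le, hu.2⟩
        rw [pointwise_id hr0.le f2 u hu (h2nn u hIco), hh2,
          ofReal_sq_rpow (h2nn u hIco) p,
          show 2 * p = r by rw [hp]; ring,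
          show (2 - θ)/2 * r - 1 = (2 - θ) * p - 1 by rw [hp]; ring]
      calc (∫⁻ t, FG t ^ r ∂μw) ^ (1/r)
          ≤ (ENNReal.ofReal (D ^ r) * (ENNReal.ofReal C * I2)) ^ (1/r) := by
            rw [e1]
            apply ENNReal.rpow_le_rpow _ (by positivity)
            apply mul_le_mul_right
            rw [← e2]
            exact hardy
        _ = ENNReal.ofReal ((D ^ r * C) ^ (1/r)) * I2 ^ (1/r) := by
            rw [← mul_assoc, ← ENNReal.ofReal_mul (by positivity),
              ENNReal.mul_rpow_of_nonneg _ _ (by positivity : (0:ℝ) ≤ 1/r),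
              ENNReal.ofReal_rpow_of_pos (by positivity)]
    set ca : ℝ := (T ^ ((1 - θ) * p) / ((1 - θ) * p)) ^ (1/r) with hca
    set cg : ℝ := (D ^ r * C) ^ (1/r) with hcg
    refine ⟨ca + cg, by positivity, ?_⟩
    calc (∫⁻ t in Ioo 0 T,
          ENNReal.ofReal (1/(T - t)) * (‖(T - t) ^ ((1 - θ)/2) * f1 t‖₊ : ℝ≥0∞) ^ r) ^ (1/r)
        ≤ (∫⁻ t, (FA t + FG t) ^ r ∂μw) ^ (1/r) :=
          ENNReal.rpow_le_rpow step1 (by positivity)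
      _ ≤ (∫⁻ t, FA t ^ r ∂μw) ^ (1/r) + (∫⁻ t, FG t ^ r ∂μw) ^ (1/r) :=
          ENNReal.lintegral_Lp_add_le hFAm.aemeasurable hFGm.aemeasurable hr1
      _ ≤ ENNReal.ofReal ca * ENNReal.ofReal A + ENNReal.ofReal cg * I2 ^ (1/r) :=
          add_le_add stepA stepG
      _ ≤ ENNReal.ofReal (ca + cg) * (ENNReal.ofReal A + I2 ^ (1/r)) := by
          have c1 : ENNReal.ofReal ca ≤ ENNReal.ofReal (ca + cg) :=
            ENNReal.ofReal_le_ofReal (le_add_of_nonneg_right (by positivity))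
          have c2 : ENNReal.ofReal cg ≤ ENNReal.ofReal (ca + cg) :=
            ENNReal.ofReal_le_ofReal (le_add_of_nonneg_left (by positivity))
          calc ENNReal.ofReal ca * ENNReal.ofReal A + ENNReal.ofReal cg * I2 ^ (1/r)
              ≤ ENNReal.ofReal (ca + cg) * ENNReal.ofReal A +
                ENNReal.ofReal (ca + cg) * I2 ^ (1/r) :=
                add_le_add (mul_le_mul_left c1 _) (mul_le_mul_left c2 _)
            _ = ENNReal.ofReal (ca + cg) * (ENNReal.ofReal A + I2 ^ (1/r)) :=
                (mul_add _ _ _).symm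

lemma lemA {T : ℝ} (q : ℝ≥0∞) (f g : ℝ → ℝ) {D : ℝ} (hD : 0 ≤ D)
    (hfg : ∀ t ∈ Ico (0:ℝ) T, |f t| ≤ D * |g t|) :
    Phi T q f ≤ ENNReal.ofReal D * Phi T q g := by
  calc Phi T q f
      ≤ eLpNorm (D • g) q ((volume.restrict (Ico (0:ℝ) T)).withDensity
          fun t => ENNReal.ofReal (1 / (T - t))) := by
        apply eLpNorm_mono_ae
        apply ae_of_Ico
        intro t ht
        simp only [Pi.smul_apply, smul_eq_mul, Real.norm_eq_abs, abs_mul, abs_of_nonneg hD]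
        exact hfg t ht
    _ = (‖D‖₊ : ℝ≥0∞) * Phi T q g := eLpNorm_const_smul D g q _
    _ = ENNReal.ofReal D * Phi T q g := by rw [← enorm_eq_nnnorm, Real.enorm_eq_ofReal hD]

/-- The deterministic interpolation lemma (Proposition A.4 of Geiss–Toivola):
the weighted `Φ_q`-norms of `d^0, d^1, d^2` with the appropriate power weights are
all equivalent up to a multiplicative constant, after adding the constant `A`. -/
theorem interpolation_lemma
    (T : ℝ) (hT : 0 < T) (θ : ℝ) (hθ0 : 0 < θ) (hθ1 : θ < 1)
    (q : ℝ≥0∞) (hq : 2 ≤ q)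
    (d : Fin 3 → ℝ → ℝ) (hdmeas : ∀ k, Measurable (d k))
    (hdnn : ∀ k, ∀ t ∈ Set.Ico (0 : ℝ) T, 0 ≤ d k t)
    (A D : ℝ) (hA : 0 ≤ A) (hD : 1 ≤ D)
    (hlow : ∀ k : Fin 3, k ≠ 0 → ∀ t ∈ Set.Ico (0 : ℝ) T,
      (1 / D) * (T - t) ^ (((k : ℕ) : ℝ) / 2) * d k t ≤ d 0 t)
    (hup : ∀ t ∈ Set.Ico (0 : ℝ) T,
      ENNReal.ofReal (d 0 t) ≤
        ENNReal.ofReal D * (∫⁻ s in Set.Ioc t T, ENNReal.ofReal ((d 1 s) ^ 2)) ^ ((1 : ℝ) / 2))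
    (hgrad : ∀ t ∈ Set.Ico (0 : ℝ) T,
      ENNReal.ofReal (d 1 t) ≤
        ENNReal.ofReal A +
          ENNReal.ofReal D *
            (∫⁻ u in Set.Ioc (0 : ℝ) t, ENNReal.ofReal ((d 2 u) ^ 2)) ^ ((1 : ℝ) / 2)) :
    ∃ c : ℝ, 0 < c ∧ ∀ k l : Fin 3,
      ENNReal.ofReal A +
          Phi T q (fun t => (T - t) ^ ((((k : ℕ) : ℝ) - θ) / 2) * d k t) ≤
        ENNReal.ofReal c *
          (ENNReal.ofReal A +
            Phi T q (fun t => (T - t) ^ ((((l : ℕ) : ℝ) - θ) / 2) * d l t)) := by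
  have hD0 : (0:ℝ) < D := lt_of_lt_of_le one_pos hD
  set Ψ : Fin 3 → ℝ≥0∞ :=
    fun k => Phi T q (fun t => (T - t) ^ ((((k : ℕ) : ℝ) - θ) / 2) * d k t) with hΨ
  have E0 : Ψ 0 = Phi T q (fun t => (T - t) ^ (-(θ/2)) * d 0 t) := by
    simp only [hΨ]
    congr 1
    all_goals
      funext t
      congr 2
      push_cast [show ((0:Fin 3):ℕ) = 0 from rfl, show ((1:Fin 3):ℕ) = 1 from rfl,
        show ((2:Fin 3):ℕ) = 2 from rfl]
      try ring
  have E1 : Ψ 1 = Phi T q (fun t => (T - t) ^ ((1 - θ)/2) * d 1 t) := by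
    simp only [hΨ]
    congr 1
    all_goals
      funext t
      congr 2
      push_cast [show ((0:Fin 3):ℕ) = 0 from rfl, show ((1:Fin 3):ℕ) = 1 from rfl,
        show ((2:Fin 3):ℕ) = 2 from rfl]
      try ring
  have E2 : Ψ 2 = Phi T q (fun t => (T - t) ^ ((2 - θ)/2) * d 2 t) := by
    simp only [hΨ]
    congr 1
    all_goals
      funext t
      congr 2
      push_cast [show ((0:Fin 3):ℕ) = 0 from rfl, show ((1:Fin 3):ℕ) = 1 from rfl,
        show ((2:Fin 3):ℕ) = 2 from rfl]
      try ring
  -- R1 : Ψ 1 ≤ D' Ψ 0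
  have R1 : Ψ 1 ≤ ENNReal.ofReal D * Ψ 0 := by
    rw [E0, E1]
    apply lemA q _ _ hD0.le
    intro t ht
    have hTt : 0 < T - t := sub_pos.2 ht.2
    have hlow1 := hlow 1 (by decide) t ht
    have hcast : (((1 : Fin 3) : ℕ) : ℝ) = 1 := by norm_num
    rw [hcast] at hlow1
    have hstep : (T - t) ^ ((1:ℝ)/2) * d 1 t ≤ D * d 0 t := by
      have hmul := mul_le_mul_of_nonneg_left hlow1 hD0.le
      have hid : D * (1 / D * (T - t) ^ ((1:ℝ)/2) * d 1 t)
          = (T - t) ^ ((1:ℝ)/2) * d 1 t := by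
        field_simp
      linarith [hmul, hid.ge]
    have hnn1 : 0 ≤ (T - t) ^ ((1 - θ)/2) * d 1 t :=
      mul_nonneg (Real.rpow_nonneg hTt.le _) (hdnn 1 t ht)
    have hnn0 : 0 ≤ (T - t) ^ (-(θ/2)) * d 0 t :=
      mul_nonneg (Real.rpow_nonneg hTt.le _) (hdnn 0 t ht)
    rw [abs_of_nonneg hnn1, abs_of_nonneg hnn0]
    calc (T - t) ^ ((1 - θ)/2) * d 1 t
        = (T - t) ^ (-(θ/2)) * ((T - t) ^ ((1:ℝ)/2) * d 1 t) := by
          rw [← mul_assoc, ← Real.rpow_add hTt,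
            show -(θ/2) + (1:ℝ)/2 = (1 - θ)/2 by ring]
      _ ≤ (T - t) ^ (-(θ/2)) * (D * d 0 t) :=
          mul_le_mul_of_nonneg_left hstep (Real.rpow_nonneg hTt.le _)
      _ = D * ((T - t) ^ (-(θ/2)) * d 0 t) := by ring
  -- R2 : Ψ 2 ≤ D' Ψ 0
  have R2 : Ψ 2 ≤ ENNReal.ofReal D * Ψ 0 := by
    rw [E0, E2]
    apply lemA q _ _ hD0.le
    intro t ht
    have hTt : 0 < T - t := sub_pos.2 ht.2
    have hlow2 := hlow 2 (by decide) t ht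
    have hcast : (((2 : Fin 3) : ℕ) : ℝ) = 2 := by norm_num
    rw [hcast] at hlow2
    have hstep : (T - t) ^ ((2:ℝ)/2) * d 2 t ≤ D * d 0 t := by
      have hmul := mul_le_mul_of_nonneg_left hlow2 hD0.le
      have hid : D * (1 / D * (T - t) ^ ((2:ℝ)/2) * d 2 t)
          = (T - t) ^ ((2:ℝ)/2) * d 2 t := by
        field_simp
      linarith [hmul, hid.ge]
    have hnn2 : 0 ≤ (T - t) ^ ((2 - θ)/2) * d 2 t :=
      mul_nonneg (Real.rpow_nonneg hTt.le _) (hdnn 2 t ht)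
    have hnn0 : 0 ≤ (T - t) ^ (-(θ/2)) * d 0 t :=
      mul_nonneg (Real.rpow_nonneg hTt.le _) (hdnn 0 t ht)
    rw [abs_of_nonneg hnn2, abs_of_nonneg hnn0]
    calc (T - t) ^ ((2 - θ)/2) * d 2 t
        = (T - t) ^ (-(θ/2)) * ((T - t) ^ ((2:ℝ)/2) * d 2 t) := by
          rw [← mul_assoc, ← Real.rpow_add hTt,
            show -(θ/2) + (2:ℝ)/2 = (2 - θ)/2 by ring]
      _ ≤ (T - t) ^ (-(θ/2)) * (D * d 0 t) :=
          mul_le_mul_of_nonneg_left hstep (Real.rpow_nonneg hTt.le _)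
      _ = D * ((T - t) ^ (-(θ/2)) * d 0 t) := by ring
  -- R3 : Ψ 0 ≤ cb Ψ 1
  obtain ⟨cb, hcb, R3'⟩ := lemB hT hθ0 hq (d 0) (d 1) (hdmeas 0) (hdmeas 1)
    (hdnn 0) (hdnn 1) hD0 hup
  have R3 : Ψ 0 ≤ ENNReal.ofReal cb * Ψ 1 := by rw [E0, E1]; exact R3'
  -- R4 : Ψ 1 ≤ cc (A' + Ψ 2)
  obtain ⟨cc, hcc, R4'⟩ := lemC hT hθ1 hq (d 1) (d 2) (hdmeas 1) (hdmeas 2)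
    (hdnn 1) (hdnn 2) hA hD0 hgrad
  have R4 : Ψ 1 ≤ ENNReal.ofReal cc * (ENNReal.ofReal A + Ψ 2) := by
    rw [E1, E2]; exact R4'
  set K : ℝ := (1 + D) * (1 + cb) * (1 + cc) with hK
  have hKpos : 0 < K := by positivity
  have glue : ∀ (m : ℝ), ENNReal.ofReal m ≤ ENNReal.ofReal K →
      ∀ x y z : ℝ≥0∞, x ≤ ENNReal.ofReal m * y → y ≤ z →
      x ≤ ENNReal.ofReal K * z :=
    fun m hm x y z h1 h2 => h1.trans (mul_le_mul' hm h2)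
  have key : ∀ x y zz : ℝ, 0 ≤ x → 0 ≤ y → 0 ≤ zz → x ≤ 1 + D → y ≤ 1 + cb →
      zz ≤ 1 + cc → x * y * zz ≤ K := by
    intro x y zz hx hy hz h1 h2 h3
    rw [hK]
    have h12 : x * y ≤ (1 + D) * (1 + cb) := mul_le_mul h1 h2 hy (by linarith)
    have := mul_le_mul h12 h3 hz (by nlinarith)
    linarith
  have hK1 : ENNReal.ofReal 1 ≤ ENNReal.ofReal K :=
    ENNReal.ofReal_le_ofReal (by
      simpa using key 1 1 1 zero_le_one zero_le_one zero_le_one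
        (by linarith) (by linarith) (by linarith))
  have hKD : ENNReal.ofReal D ≤ ENNReal.ofReal K :=
    ENNReal.ofReal_le_ofReal (by
      simpa using key D 1 1 hD0.le zero_le_one zero_le_one
        (by linarith) (by linarith) (by linarith))
  have hKb : ENNReal.ofReal cb ≤ ENNReal.ofReal K :=
    ENNReal.ofReal_le_ofReal (by
      simpa using key 1 cb 1 zero_le_one hcb.le zero_le_one
        (by linarith) (by linarith) (by linarith))
  have hKc : ENNReal.ofReal cc ≤ ENNReal.ofReal K :=
    ENNReal.ofReal_le_ofReal (by
      simpa using key 1 1 cc zero_le_one zero_le_one hcc.le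
        (by linarith) (by linarith) (by linarith))
  have hKdb : ENNReal.ofReal (D * cb) ≤ ENNReal.ofReal K :=
    ENNReal.ofReal_le_ofReal (by
      simpa using key D cb 1 hD0.le hcb.le zero_le_one
        (by linarith) (by linarith) (by linarith))
  have hKbc : ENNReal.ofReal (cb * cc) ≤ ENNReal.ofReal K :=
    ENNReal.ofReal_le_ofReal (by
      simpa [mul_assoc] using key 1 cb cc zero_le_one hcb.le hcc.le
        (by linarith) (by linarith) (by linarith))
  have hKdbc : ENNReal.ofReal (D * cb * cc) ≤ ENNReal.ofReal K :=
    ENNReal.ofReal_le_ofReal (by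
      simpa using key D cb cc hD0.le hcb.le hcc.le
        (by linarith) (by linarith) (by linarith))
  have RB : Ψ 0 ≤ ENNReal.ofReal (cb * cc) * (ENNReal.ofReal A + Ψ 2) := by
    calc Ψ 0 ≤ ENNReal.ofReal cb * Ψ 1 := R3
      _ ≤ ENNReal.ofReal cb * (ENNReal.ofReal cc * (ENNReal.ofReal A + Ψ 2)) :=
          mul_le_mul_right R4 _
      _ = ENNReal.ofReal (cb * cc) * (ENNReal.ofReal A + Ψ 2) := by
          rw [← mul_assoc, ← ENNReal.ofReal_mul hcb.le]
  have RC : Ψ 2 ≤ ENNReal.ofReal (D * cb) * Ψ 1 := by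
    calc Ψ 2 ≤ ENNReal.ofReal D * Ψ 0 := R2
      _ ≤ ENNReal.ofReal D * (ENNReal.ofReal cb * Ψ 1) := mul_le_mul_right R3 _
      _ = ENNReal.ofReal (D * cb) * Ψ 1 := by
          rw [← mul_assoc, ← ENNReal.ofReal_mul hD0.le]
  have RD : Ψ 2 ≤ ENNReal.ofReal (D * cb * cc) * (ENNReal.ofReal A + Ψ 2) := by
    calc Ψ 2 ≤ ENNReal.ofReal (D * cb) * Ψ 1 := RC
      _ ≤ ENNReal.ofReal (D * cb) * (ENNReal.ofReal cc * (ENNReal.ofReal A + Ψ 2)) :=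
          mul_le_mul_right R4 _
      _ = ENNReal.ofReal (D * cb * cc) * (ENNReal.ofReal A + Ψ 2) := by
          rw [← mul_assoc, ← ENNReal.ofReal_mul (by positivity)]
  have main : ∀ k l : Fin 3, Ψ k ≤ ENNReal.ofReal K * (ENNReal.ofReal A + Ψ l) := by
    intro k l
    fin_cases k <;> fin_cases l
    · exact glue 1 hK1 _ _ _ (by simp) le_add_self
    · exact glue cb hKb _ _ _ R3 le_add_self
    · exact glue (cb * cc) hKbc _ _ _ RB le_rfl
    · exact glue D hKD _ _ _ R1 le_add_self
    · exact glue 1 hK1 _ _ _ (by simp) le_add_self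
    · exact glue cc hKc _ _ _ R4 le_rfl
    · exact glue D hKD _ _ _ R2 le_add_self
    · exact glue (D * cb) hKdb _ _ _ RC le_add_self
    · exact glue (D * cb * cc) hKdbc _ _ _ RD le_rfl
  refine ⟨1 + K, by positivity, fun k l => ?_⟩
  calc ENNReal.ofReal A + Ψ k
      ≤ ENNReal.ofReal A + ENNReal.ofReal K * (ENNReal.ofReal A + Ψ l) :=
        add_le_add_right (main k l) _
    _ ≤ 1 * (ENNReal.ofReal A + Ψ l) + ENNReal.ofReal K * (ENNReal.ofReal A + Ψ l) := by
        apply add_le_add_left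
        rw [one_mul]
        exact le_self_add
    _ = (1 + ENNReal.ofReal K) * (ENNReal.ofReal A + Ψ l) := (add_mul _ _ _).symm
    _ = ENNReal.ofReal (1 + K) * (ENNReal.ofReal A + Ψ l) := by
        rw [ENNReal.ofReal_add (by norm_num) hKpos.le, ENNReal.ofReal_one]
end
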